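/- Let G be connected, let ξ be a hierarchically connected plan of G, let 𝒞 be a connected component of the administrative adjacency graph of ξ, and let S be the set of regions of ξ belonging to 𝒞. If Split(S) = |S| − 1, then there exists a tree T, a subgraph of G with vertex set ⋃_{G_k ∈ S} V(G_k), such that (i) for every region G_k ∈ S the restriction of T to V(G_k) (the subgraph with vertex set V(G_k) and the edges of T with both endpoints in V(G_k)) is an η-hierarchical tree on G_k, and (ii) T is an η-hierarchical tree on G[⋃_{G_k ∈ S} V(G_k)]. -/

import Mathlib

open SimpleGraph

namespace Redist

variable {V : Type*} [Fintype V] [DecidableEq V]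

/-- The subgraph of `G` induced by the vertex set `s` (the graph `G[s]`). -/
abbrev ind (G : SimpleGraph V) (s : Set V) : G.Subgraph :=
  (⊤ : G.Subgraph).induce s

/-- `T` is a spanning tree of the subgraph `H` of `G`. -/
def IsSpanningTreeOf (G : SimpleGraph V) (T H : G.Subgraph) : Prop :=
  T ≤ H ∧ T.verts = H.verts ∧ T.coe.IsTree

/-- `τ H`: the number of spanning trees of the subgraph `H`. -/
noncomputable def tau (G : SimpleGraph V) (H : G.Subgraph) : ℕ :=
  {T : G.Subgraph | IsSpanningTreeOf G T H}.ncard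

/-- `C(s, t)`: the set of edges of `G` with one endpoint in `s` and the other in `t`. -/
def crossEdges (G : SimpleGraph V) (s t : Set V) : Set (Sym2 V) :=
  {e | e ∈ G.edgeSet ∧ ∃ u v : V, e = s(u, v) ∧ u ∈ s ∧ v ∈ t}

/-- The subgraph obtained from `H` by adding the edges in `E'` (that are edges of `G`). -/
def withEdges (G : SimpleGraph V) (H : G.Subgraph) (E' : Set (Sym2 V)) : G.Subgraph where
  verts := H.verts ∪ {v | ∃ e ∈ E' ∩ G.edgeSet, v ∈ e}
  Adj u v := H.Adj u v ∨ (s(u, v) ∈ E' ∧ G.Adj u v)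
  adj_sub := by
    rintro u v (h | ⟨-, h⟩)
    · exact H.adj_sub h
    · exact h
  edge_vert := by
    rintro u v (h | ⟨h, hG⟩)
    · exact Or.inl (H.edge_vert h)
    · exact Or.inr ⟨s(u, v), ⟨h, hG⟩, Sym2.mem_mk_left u v⟩
  symm := by
    refine ⟨?_⟩
    rintro u v (h | ⟨h, hG⟩)
    · exact Or.inl (H.adj_symm h)
    · exact Or.inr ⟨by rwa [Sym2.eq_swap], hG.symm⟩

/-- A plan with `r` regions: a partition of the vertex set into `r` nonempty blocks,
each inducing a connected subgraph. -/
structure Plan (G : SimpleGraph V) (r : ℕ) where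
  blocks : Set (Set V)
  ncard_blocks : blocks.ncard = r
  blocks_nonempty : ∀ B ∈ blocks, B.Nonempty
  blocks_disjoint : ∀ B ∈ blocks, ∀ B' ∈ blocks, B ≠ B' → Disjoint B B'
  blocks_cover : ∀ v : V, ∃ B ∈ blocks, v ∈ B
  blocks_connected : ∀ B ∈ blocks, (ind G B).Connected

/-- `ξp` is a 1-region ancestor of `ξr`: exactly one region of `ξp` is not a region of `ξr`. -/
def IsAncestor (G : SimpleGraph V) {r : ℕ} (ξp : Plan G (r - 1)) (ξr : Plan G r) : Prop :=
  (ξp.blocks \ ξr.blocks).ncard = 1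

/-- An `r`-region forest plan: `r` vertex-disjoint trees covering all of `V`. -/
structure ForestPlan (G : SimpleGraph V) (r : ℕ) where
  trees : Set G.Subgraph
  ncard_trees : trees.ncard = r
  isTree : ∀ T ∈ trees, T.coe.IsTree
  trees_disjoint : ∀ T ∈ trees, ∀ T' ∈ trees, T ≠ T' → Disjoint T.verts T'.verts
  trees_cover : ∀ v : V, ∃ T ∈ trees, v ∈ T.verts

/-- The induced plan of a forest plan (as a family of blocks). -/
def forestBlocks (G : SimpleGraph V) {r : ℕ} (F : ForestPlan G r) : Set (Set V) :=
  Subgraph.verts '' F.trees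

/-- `Fp` is a 1-region tree ancestor of `Fr`. -/
def ForestAncestor (G : SimpleGraph V) {r : ℕ} (Fp : ForestPlan G (r - 1))
    (Fr : ForestPlan G r) : Prop :=
  (Fp.trees \ Fr.trees).ncard = 1

variable {A : Type*}

/-- The set of administrative units meeting the vertex set `s`. -/
def unitSet (η : V → A) (s : Set V) : Set A := {a | (s ∩ η ⁻¹' {a}).Nonempty}

/-- A block is hierarchically connected: its intersection with each administrative unit has
at most one connected component. -/
def HierConnectedBlock (G : SimpleGraph V) (η : V → A) (B : Set V) : Prop :=
  ∀ a : A, (ind G (B ∩ η ⁻¹' {a})).coe.Preconnected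

/-- `T` is an `η`-hierarchical tree on the region induced by `B`. -/
def IsHierTree (G : SimpleGraph V) (η : V → A) (T : G.Subgraph) (B : Set V) : Prop :=
  IsSpanningTreeOf G T (ind G B) ∧
    ∀ a : A, (B ∩ η ⁻¹' {a}).Nonempty →
      IsSpanningTreeOf G (T.induce (B ∩ η ⁻¹' {a})) (ind G (B ∩ η ⁻¹' {a}))

/-- Two blocks are administratively adjacent. -/
def AdminAdj (G : SimpleGraph V) (η : V → A) (B B' : Set V) : Prop :=
  ∃ a : A, ∃ u v : V, G.Adj u v ∧ u ∈ B ∩ η ⁻¹' {a} ∧ v ∈ B' ∩ η ⁻¹' {a}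

/-- `S` is (the set of regions of) a connected component of the administrative adjacency
graph of the plan with blocks `blocks`. -/
def IsAdminComponent (G : SimpleGraph V) (η : V → A) (blocks S : Set (Set V)) : Prop :=
  S ⊆ blocks ∧ S.Nonempty ∧
    (∀ B ∈ S, ∀ B' ∈ S,
      Relation.ReflTransGen (fun X Y => X ∈ S ∧ Y ∈ S ∧ AdminAdj G η X Y) B B') ∧
    ∀ B ∈ S, ∀ B' ∈ blocks, B' ∉ S → ¬AdminAdj G η B B'

/-- The number of connected components of the subgraph induced by `s`. -/
noncomputable def numComponents (G : SimpleGraph V) (s : Set V) : ℕ :=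
  Nat.card ((ind G s).coe.ConnectedComponent)

/-- The number of administrative splits of a family `S` of blocks. -/
noncomputable def splits [Fintype A] (G : SimpleGraph V) (η : V → A) (S : Set (Set V)) : ℕ :=
  (∑ᶠ a : A, ∑ᶠ B ∈ S, numComponents G (B ∩ η ⁻¹' {a})) -
    {a : A | ∃ B ∈ S, (B ∩ η ⁻¹' {a}).Nonempty}.ncard

/-- `T` is a hierarchical plan tree for the plan with blocks `blocks`. -/
def IsHierPlanTree (G : SimpleGraph V) (η : V → A) (T : G.Subgraph)
    (blocks : Set (Set V)) : Prop :=
  IsHierTree G η T Set.univ ∧ ∀ B ∈ blocks, IsHierTree G η (T.induce B) B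

/-- The plan with blocks `blocks` is hierarchical. -/
def IsHierPlanBlocks (G : SimpleGraph V) (η : V → A) (blocks : Set (Set V)) : Prop :=
  ∃ T : G.Subgraph, IsHierPlanTree G η T blocks

/-- The effective region tree boundary length between two vertex-disjoint trees. -/
noncomputable def EffB (G : SimpleGraph V) (p : G.Subgraph → Sym2 V → ℝ)
    (Tk Tk' : G.Subgraph) : ℝ :=
  ∑ᶠ e ∈ crossEdges G Tk.verts Tk'.verts, p (withEdges G (Tk ⊔ Tk') {e}) e




section TreeLemmas

variable {W : Type*} [Fintype W] [DecidableEq W]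

omit [Fintype W] [DecidableEq W] in
lemma reachable_delete_of_not_bridge (G : SimpleGraph W) {u v : W} (hadj : G.Adj u v)
    (hnb : ¬ G.IsBridge s(u, v)) :
    ∀ x y : W, G.Reachable x y → (G \ fromEdgeSet {s(u, v)}).Reachable x y := by
  have huv : (G \ fromEdgeSet {s(u, v)}).Reachable u v := by
    rw [isBridge_iff] at hnb
    push_neg at hnb
    exact hnb
  intro x y hxy
  obtain ⟨p⟩ := hxy
  induction p with
  | nil => rfl
  | @cons a b c hab p ih =>
    refine Reachable.trans ?_ ih
    by_cases he : s(a, b) = s(u, v)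
    · rw [Sym2.eq_iff] at he
      rcases he with ⟨rfl, rfl⟩ | ⟨rfl, rfl⟩
      · exact huv
      · exact huv.symm
    · exact Adj.reachable (by
        rw [sdiff_adj]
        refine ⟨hab, ?_⟩
        rw [fromEdgeSet_adj]
        rintro ⟨h1, -⟩
        exact he h1)

lemma ncard_edgeSet_eq_card_edgeFinset (G : SimpleGraph W) [Fintype G.edgeSet] :
    G.edgeSet.ncard = G.edgeFinset.card := by
  rw [Set.ncard_eq_toFinset_card', edgeFinset]

lemma isTree_ncard_edgeSet {T : SimpleGraph W} (hT : T.IsTree) :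
    T.edgeSet.ncard + 1 = Fintype.card W := by
  classical
  rw [ncard_edgeSet_eq_card_edgeFinset]
  exact hT.card_edgeFinset

/-- Every graph has a spanning forest: an acyclic subgraph with the same reachability. -/
lemma exists_spanning_forest (G : SimpleGraph W) :
    ∃ F : SimpleGraph W, F ≤ G ∧ F.IsAcyclic ∧ (∀ u v, F.Reachable u v ↔ G.Reachable u v) := by
  classical
  generalize hn : G.edgeSet.ncard = n
  induction n using Nat.strong_induction_on generalizing G with
  | _ n ih =>
    by_cases hac : G.IsAcyclic
    · exact ⟨G, le_rfl, hac, fun u v => Iff.rfl⟩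
    · rw [isAcyclic_iff_forall_edge_isBridge] at hac
      push_neg at hac
      obtain ⟨e, he, hnb⟩ := hac
      induction e with
      | _ u v =>
      have hadj : G.Adj u v := he
      set G' := G \ fromEdgeSet {s(u, v)} with hG'
      have hle : G' ≤ G := sdiff_le
      have hlt : G'.edgeSet.ncard < n := by
        subst hn
        apply Set.ncard_lt_ncard _ (Set.toFinite _)
        rw [Set.ssubset_iff_of_subset (edgeSet_mono hle)]
        refine ⟨s(u, v), hadj, ?_⟩
        simp only [hG', edgeSet_sdiff, Set.mem_diff]
        rintro ⟨-, h2⟩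
        apply h2
        simp [hadj.ne]
      obtain ⟨F, hF1, hF2, hF3⟩ := ih _ hlt G' rfl
      refine ⟨F, hF1.trans hle, hF2, fun x y => ⟨fun h => ?_, fun h => ?_⟩⟩
      · exact (h.mono (hF1.trans hle))
      · exact (hF3 x y).2 (reachable_delete_of_not_bridge G hadj hnb x y h)

lemma Connected.exists_spanning_tree {G : SimpleGraph W} (hG : G.Connected) :
    ∃ T : SimpleGraph W, T ≤ G ∧ T.IsTree := by
  obtain ⟨F, h1, h2, h3⟩ := exists_spanning_forest G
  have hne := hG.nonempty
  exact ⟨F, h1, ⟨(connected_iff _).2 ⟨fun u v => (h3 u v).2 (hG.preconnected u v), hne⟩, h2⟩⟩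

/-- Every acyclic graph extends to a spanning tree. -/
lemma isAcyclic_exists_tree_ge [Nonempty W] {F : SimpleGraph W} (hF : F.IsAcyclic) :
    ∃ T : SimpleGraph W, F ≤ T ∧ T.IsTree := by
  classical
  generalize hn : ((⊤ : SimpleGraph W).edgeSet.ncard - F.edgeSet.ncard) = n
  induction n using Nat.strong_induction_on generalizing F with
  | _ n ih =>
    by_cases hc : F.Connected
    · exact ⟨F, le_rfl, ⟨hc, hF⟩⟩
    · have : ∃ u v : W, ¬ F.Reachable u v := by
        by_contra h
        push_neg at h
        exact hc ((connected_iff _).2 ⟨fun u v => h u v, ‹Nonempty W›⟩)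
      obtain ⟨u, v, huv⟩ := this
      have hne : u ≠ v := fun h => huv (h ▸ Reachable.refl u)
      have hnadj : ¬ F.Adj u v := fun h => huv h.reachable
      set F' := F ⊔ fromEdgeSet {s(u, v)} with hF'
      have hFle : F ≤ F' := le_sup_left
      have hadj' : F'.Adj u v := Or.inr (by rw [fromEdgeSet_adj]; exact ⟨rfl, hne⟩)
      have hacy : F'.IsAcyclic := by
        intro w c hc'
        by_cases hmem : s(u, v) ∈ c.edges
        · have hbridge : F'.IsBridge s(u, v) := by
            rw [isBridge_iff]
            intro hreach
            apply huv
            have heq : F' \ fromEdgeSet {s(u, v)} = F := by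
              rw [hF', sup_sdiff, sdiff_self, sup_bot_eq, sdiff_eq_left,
                disjoint_fromEdgeSet]
              exact Set.disjoint_singleton_right.2 hnadj
            rwa [deleteEdges, heq] at hreach
          rw [isBridge_iff_mem_and_forall_cycle_notMem hadj'] at hbridge
          exact hbridge c hc' hmem
        · have hsub : ∀ e ∈ c.edges, e ∈ F.edgeSet := by
            intro e hce
            have := c.edges_subset_edgeSet hce
            rw [hF', edgeSet_sup] at this
            rcases this with h | h
            · exact h
            · rw [edgeSet_fromEdgeSet] at h
              obtain ⟨h1, -⟩ := h
              simp only [Set.mem_singleton_iff] at h1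
              exact absurd (h1 ▸ hce) hmem
          exact hF (c.transfer F hsub) (hc'.transfer hsub)
      have hcard : ((⊤ : SimpleGraph W).edgeSet.ncard - F'.edgeSet.ncard) < n := by
        subst hn
        have hlt : F.edgeSet.ncard < F'.edgeSet.ncard := by
          apply Set.ncard_lt_ncard _ (Set.toFinite _)
          rw [Set.ssubset_iff_of_subset (edgeSet_mono hFle)]
          exact ⟨s(u, v), hadj', hnadj⟩
        have hle' : F'.edgeSet.ncard ≤ (⊤ : SimpleGraph W).edgeSet.ncard :=
          Set.ncard_le_ncard (edgeSet_mono le_top) (Set.toFinite _)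
        omega
      obtain ⟨T, hT1, hT2⟩ := ih _ hcard hacy rfl
      exact ⟨T, hFle.trans hT1, hT2⟩

lemma Connected.card_le_ncard_edgeSet {G : SimpleGraph W} (hG : G.Connected) :
    Fintype.card W ≤ G.edgeSet.ncard + 1 := by
  obtain ⟨T, hT1, hT2⟩ := Connected.exists_spanning_tree hG
  rw [← isTree_ncard_edgeSet hT2]
  exact Nat.add_le_add_right (Set.ncard_le_ncard (edgeSet_mono hT1) (Set.toFinite _)) 1

lemma isTree_of_connected_of_ncard_le {G : SimpleGraph W} (hG : G.Connected)
    (hcard : G.edgeSet.ncard + 1 ≤ Fintype.card W) : G.IsTree := by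
  obtain ⟨T, hT1, hT2⟩ := Connected.exists_spanning_tree hG
  have h1 : T.edgeSet.ncard + 1 = Fintype.card W := isTree_ncard_edgeSet hT2
  have h3 : T.edgeSet = G.edgeSet :=
    Set.eq_of_subset_of_ncard_le (edgeSet_mono hT1) (by omega) (Set.toFinite _)
  have : T = G := edgeSet_inj.1 h3
  exact this ▸ hT2

lemma isAcyclic_ncard_le [Nonempty W] {F : SimpleGraph W} (hF : F.IsAcyclic) :
    F.edgeSet.ncard + 1 ≤ Fintype.card W := by
  obtain ⟨T, hT1, hT2⟩ := isAcyclic_exists_tree_ge hF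
  rw [← isTree_ncard_edgeSet hT2]
  exact Nat.add_le_add_right (Set.ncard_le_ncard (edgeSet_mono hT1) (Set.toFinite _)) 1

lemma isAcyclic_connected_of_ncard [Nonempty W] {F : SimpleGraph W} (hF : F.IsAcyclic)
    (hcard : F.edgeSet.ncard + 1 = Fintype.card W) : F.Connected := by
  obtain ⟨T, hT1, hT2⟩ := isAcyclic_exists_tree_ge hF
  have h1 : T.edgeSet.ncard + 1 = Fintype.card W := isTree_ncard_edgeSet hT2
  have h3 : F.edgeSet = T.edgeSet :=
    Set.eq_of_subset_of_ncard_le (edgeSet_mono hT1) (by omega) (Set.toFinite _)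
  have : F = T := edgeSet_inj.1 h3
  exact this ▸ hT2.isConnected

end TreeLemmas


section Util

variable (G : SimpleGraph V)

/-- sum of ncards of pairwise disjoint sets -/
lemma ncard_biUnion_eq_sum {α β : Type*} (FF : Finset α) (g : α → Set β)
    (hfin : ∀ x ∈ FF, (g x).Finite)
    (hd : ∀ x ∈ FF, ∀ y ∈ FF, x ≠ y → Disjoint (g x) (g y)) :
    (⋃ x ∈ FF, g x).ncard = ∑ x ∈ FF, (g x).ncard := by
  classical
  induction FF using Finset.induction_on with
  | empty => simp
  | @insert a FF ha ih =>
    rw [Finset.set_biUnion_insert, Finset.sum_insert ha]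
    rw [Set.ncard_union_eq ?disj ?f1 ?f2]
    · rw [ih (fun x hx => hfin x (Finset.mem_insert_of_mem hx))
        (fun x hx y hy hxy => hd x (Finset.mem_insert_of_mem hx) y
          (Finset.mem_insert_of_mem hy) hxy)]
    case disj =>
      rw [Set.disjoint_iUnion₂_right]
      intro x hx
      exact hd a (Finset.mem_insert_self a FF) x (Finset.mem_insert_of_mem hx)
        (fun h => ha (h ▸ hx))
    case f1 => exact hfin a (Finset.mem_insert_self a FF)
    case f2 =>
      apply Set.Finite.biUnion (FF.finite_toSet)
      exact fun x hx => hfin x (Finset.mem_insert_of_mem hx)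

variable {G}


lemma ncard_coe_edgeSet (H : G.Subgraph) : H.coe.edgeSet.ncard = H.edgeSet.ncard := by
  rw [← Subgraph.image_coe_edgeSet_coe H]
  exact (Set.ncard_image_of_injective _ (Sym2.map.injective Subtype.val_injective)).symm

/-- edge count of a spanning tree of an induced subgraph -/
lemma spanningTree_edge_count {s : Set V} {T : G.Subgraph}
    (hT : IsSpanningTreeOf G T (ind G s)) : T.edgeSet.ncard + 1 = s.ncard := by
  classical
  haveI : Fintype ↥T.verts := Fintype.ofFinite _
  have h1 := isTree_ncard_edgeSet hT.2.2
  rw [ncard_coe_edgeSet] at h1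
  have h2 : Fintype.card ↥T.verts = T.verts.ncard := by
    rw [← Nat.card_eq_fintype_card, Nat.card_coe_set_eq]
  rw [h1, h2]
  congr 1
  exact hT.2.1

/-- reachability in coe is monotone in the subgraph -/
lemma coe_reachable_mono {T1 T2 : G.Subgraph} (h : T1 ≤ T2) {u v : V}
    (hu : u ∈ T1.verts) (hv : v ∈ T1.verts)
    (hr : T1.coe.Reachable ⟨u, hu⟩ ⟨v, hv⟩) :
    T2.coe.Reachable ⟨u, h.1 hu⟩ ⟨v, h.1 hv⟩ := by
  have := hr.map (Subgraph.inclusion h)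
  exact this

/-- build a subgraph from a simple graph on a subtype -/
def liftSub (s : Set V) (T' : SimpleGraph s) (h : ∀ u v : s, T'.Adj u v → G.Adj u v) :
    G.Subgraph where
  verts := s
  Adj u v := ∃ (hu : u ∈ s) (hv : v ∈ s), T'.Adj ⟨u, hu⟩ ⟨v, hv⟩
  adj_sub := by rintro u v ⟨hu, hv, hadj⟩; exact h _ _ hadj
  edge_vert := by rintro u v ⟨hu, hv, hadj⟩; exact hu
  symm := ⟨by rintro u v ⟨hu, hv, hadj⟩; exact ⟨hv, hu, hadj.symm⟩⟩

lemma liftSub_coe (s : Set V) (T' : SimpleGraph s) (h : ∀ u v : s, T'.Adj u v → G.Adj u v) :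
    (liftSub s T' h).coe = T' := by
  ext ⟨u, hu⟩ ⟨v, hv⟩
  constructor
  · rintro ⟨hu', hv', hadj⟩
    exact hadj
  · intro hadj
    exact ⟨hu, hv, hadj⟩

/-- a connected induced subgraph has a spanning tree -/
lemma exists_spanning_tree_ind {s : Set V} (hconn : (ind G s).Connected) :
    ∃ T : G.Subgraph, IsSpanningTreeOf G T (ind G s) := by
  classical
  have hcoe : (ind G s).coe.Connected := hconn
  obtain ⟨T', hT'le, hT'⟩ := Connected.exists_spanning_tree hcoe
  have hadj : ∀ u v : ((ind G s).verts : Set V), T'.Adj u v → G.Adj u v := by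
    intro u v h
    exact (ind G s).coe_adj_sub u v (hT'le h)
  refine ⟨liftSub _ T' hadj, ⟨?_, ?_⟩, rfl, ?_⟩
  · intro u hu; exact hu
  · rintro u v ⟨hu, hv, hadj'⟩
    have := (ind G s).coe_adj_sub _ _ (hT'le hadj')
    exact ⟨hu, hv, this⟩
  · rw [liftSub_coe]
    exact hT'

end Util

section Glue

variable (G : SimpleGraph V)

/-- One step between blocks of a family through an edge of `R`. -/
def stepRel (F : Set (Set V)) (R : Set (Sym2 V)) (x y : Set V) : Prop :=
  x ∈ F ∧ y ∈ F ∧ ∃ u v, u ∈ x ∧ v ∈ y ∧ s(u, v) ∈ R ∧ G.Adj u v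

variable {G}

section GlueHyps

variable {F : Set (Set V)} {Ts : Set V → G.Subgraph} {R : Set (Sym2 V)} {TT : G.Subgraph}
variable (hverts : TT.verts = ⋃₀ F)
variable (hAdj : ∀ u v, TT.Adj u v ↔ (∃ x ∈ F, (Ts x).Adj u v) ∨ (s(u, v) ∈ R ∧ G.Adj u v))
variable (hne : ∀ x ∈ F, x.Nonempty)
variable (hdisj : ∀ x ∈ F, ∀ y ∈ F, x ≠ y → Disjoint x y)
variable (hTs : ∀ x ∈ F, IsSpanningTreeOf G (Ts x) (ind G x))
variable (hR : ∀ e ∈ R, ∃ u v x y, e = s(u, v) ∧ G.Adj u v ∧ x ∈ F ∧ y ∈ F ∧ x ≠ y ∧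
    u ∈ x ∧ v ∈ y)

include hTs in
lemma glue_piece_facts : ∀ x ∈ F, (Ts x).verts = x ∧
    ∀ u v, (Ts x).Adj u v → u ∈ x ∧ v ∈ x ∧ G.Adj u v := by
  intro x hx
  obtain ⟨hle, hv, -⟩ := hTs x hx
  refine ⟨hv, fun u v h => ?_⟩
  have := hle.2 h
  exact ⟨this.1, this.2.1, this.2.2⟩

include hdisj hne in
lemma glue_unique_block {x y : Set V} (hx : x ∈ F) (hy : y ∈ F) {u : V}
    (hux : u ∈ x) (huy : u ∈ y) : x = y := by
  by_contra hne'
  exact Set.disjoint_left.1 (hdisj x hx y hy hne') hux huy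

include hverts hAdj hTs hR in
lemma glue_le : TT ≤ ind G (⋃₀ F) := by
  constructor
  · rw [hverts]; intro u hu; exact hu
  · intro u v h
    rw [hAdj] at h
    rcases h with ⟨x, hx, hadj⟩ | ⟨hRe, hGadj⟩
    · obtain ⟨-, hfacts⟩ := glue_piece_facts hTs x hx
      obtain ⟨hu, hv, hG⟩ := hfacts u v hadj
      exact ⟨⟨x, hx, hu⟩, ⟨x, hx, hv⟩, hG⟩
    · obtain ⟨u', v', x, y, he, hG', hx, hy, -, hu', hv'⟩ := hR _ hRe
      rw [Sym2.eq_iff] at he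
      rcases he with ⟨rfl, rfl⟩ | ⟨rfl, rfl⟩
      · exact ⟨⟨x, hx, hu'⟩, ⟨y, hy, hv'⟩, hGadj⟩
      · exact ⟨⟨y, hy, hv'⟩, ⟨x, hx, hu'⟩, hGadj⟩

include hverts hAdj hTs in
lemma glue_reach_within {x : Set V} (hx : x ∈ F) {u v : V}
    (hu : u ∈ TT.verts) (hv : v ∈ TT.verts) (hux : u ∈ x) (hvx : v ∈ x) :
    TT.coe.Reachable ⟨u, hu⟩ ⟨v, hv⟩ := by
  obtain ⟨hTv, -⟩ := glue_piece_facts hTs x hx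
  have hle : Ts x ≤ TT := by
    constructor
    · rw [hverts, hTv]
      exact fun w hw => ⟨x, hx, hw⟩
    · intro a b h
      exact (hAdj a b).2 (Or.inl ⟨x, hx, h⟩)
  have hconn : (Ts x).coe.Connected := (hTs x hx).2.2.isConnected
  have hu' : u ∈ (Ts x).verts := by rw [hTv]; exact hux
  have hv' : v ∈ (Ts x).verts := by rw [hTv]; exact hvx
  have := coe_reachable_mono hle hu' hv' (hconn.preconnected ⟨u, hu'⟩ ⟨v, hv'⟩)
  exact this

include hverts hAdj hTs in
lemma glue_reach_step {x y : Set V} (hstep : Relation.ReflTransGen (stepRel G F R) x y)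
    (hy : y ∈ F) {u v : V} (hu : u ∈ TT.verts) (hv : v ∈ TT.verts)
    (hux : u ∈ x) (hvy : v ∈ y) :
    TT.coe.Reachable ⟨u, hu⟩ ⟨v, hv⟩ := by
  induction hstep using Relation.ReflTransGen.head_induction_on generalizing u hu with
  | refl => exact glue_reach_within hverts hAdj hTs hy hu hv hux hvy
  | @head a c hac hcy ih =>
    obtain ⟨haF, hcF, p, q, hpa, hqc, hpqR, hpq⟩ := hac
    have hpv : p ∈ TT.verts := by rw [hverts]; exact ⟨a, haF, hpa⟩
    have hqv : q ∈ TT.verts := by rw [hverts]; exact ⟨c, hcF, hqc⟩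
    have hadj : TT.Adj p q := (hAdj p q).2 (Or.inr ⟨hpqR, hpq⟩)
    have h1 : TT.coe.Reachable ⟨u, hu⟩ ⟨p, hpv⟩ :=
      glue_reach_within hverts hAdj hTs haF hu hpv hux hpa
    have h2 : TT.coe.Adj ⟨p, hpv⟩ ⟨q, hqv⟩ := hadj
    have h3 : TT.coe.Reachable ⟨q, hqv⟩ ⟨v, hv⟩ := ih hqv hqc
    exact (h1.trans h2.reachable).trans h3

include hverts hAdj hne hdisj hTs hR in
lemma glue_edge_count : TT.edgeSet.ncard + F.ncard = (⋃₀ F).ncard + R.ncard := by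
  classical
  have hFfin : F.Finite := Set.toFinite F
  set FF := hFfin.toFinset with hFF
  have hmemFF : ∀ x, x ∈ FF ↔ x ∈ F := fun x => hFfin.mem_toFinset
  -- edge set decomposition
  have hdecomp : TT.edgeSet = (⋃ x ∈ FF, (Ts x).edgeSet) ∪ R := by
    ext e
    induction e with
    | _ u v =>
      rw [Subgraph.mem_edgeSet, hAdj]
      simp only [Set.mem_union, Set.mem_iUnion]
      constructor
      · rintro (⟨x, hx, hadj⟩ | ⟨hRe, -⟩)
        · exact Or.inl ⟨x, (hmemFF x).2 hx, hadj⟩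
        · exact Or.inr hRe
      · rintro (⟨x, hx, hadj⟩ | hRe)
        · exact Or.inl ⟨x, (hmemFF x).1 hx, hadj⟩
        · refine Or.inr ⟨hRe, ?_⟩
          obtain ⟨u', v', x, y, he, hG', -, -, -, -, -⟩ := hR _ hRe
          rw [Sym2.eq_iff] at he
          rcases he with ⟨rfl, rfl⟩ | ⟨rfl, rfl⟩
          · exact hG'
          · exact hG'.symm
  -- edges of distinct pieces are disjoint, and piece edges are disjoint from R
  have hedgemem : ∀ x ∈ F, ∀ e ∈ (Ts x).edgeSet, ∀ w ∈ e, w ∈ x := by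
    intro x hx e he w hw
    induction e with
    | _ a b =>
      obtain ⟨-, hfacts⟩ := glue_piece_facts hTs x hx
      obtain ⟨ha, hb, -⟩ := hfacts a b he
      rcases Sym2.mem_iff.1 hw with rfl | rfl
      · exact ha
      · exact hb
  have hpdisj : ∀ x ∈ FF, ∀ y ∈ FF, x ≠ y → Disjoint (Ts x).edgeSet (Ts y).edgeSet := by
    intro x hx y hy hxy
    rw [Set.disjoint_left]
    intro e hex hey
    have hw : ∃ w, w ∈ e := by
      induction e with
      | _ a b => exact ⟨a, Sym2.mem_mk_left a b⟩
    obtain ⟨w, hw⟩ := hw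
    exact hxy (glue_unique_block hne hdisj ((hmemFF x).1 hx) ((hmemFF y).1 hy)
      (hedgemem x ((hmemFF x).1 hx) e hex w hw) (hedgemem y ((hmemFF y).1 hy) e hey w hw))
  have hRdisj : Disjoint (⋃ x ∈ FF, (Ts x).edgeSet) R := by
    rw [Set.disjoint_left]
    intro e he heR
    simp only [Set.mem_iUnion] at he
    obtain ⟨x, hx, hex⟩ := he
    obtain ⟨u', v', y, z, heq, -, hy, hz, hyz, hu', hv'⟩ := hR _ heR
    have hu'x : u' ∈ x := hedgemem x ((hmemFF x).1 hx) e hex u' (by rw [heq]; exact Sym2.mem_mk_left _ _)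
    have hv'x : v' ∈ x := hedgemem x ((hmemFF x).1 hx) e hex v' (by rw [heq]; exact Sym2.mem_mk_right _ _)
    have h1 : y = x := glue_unique_block hne hdisj hy ((hmemFF x).1 hx) hu' hu'x
    have h2 : z = x := glue_unique_block hne hdisj hz ((hmemFF x).1 hx) hv' hv'x
    exact hyz (h1.trans h2.symm)
  have hcount1 : TT.edgeSet.ncard = (∑ x ∈ FF, (Ts x).edgeSet.ncard) + R.ncard := by
    rw [hdecomp, Set.ncard_union_eq hRdisj
      (Set.Finite.biUnion (FF.finite_toSet) (fun x _ => Set.toFinite _)) (Set.toFinite _),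
      ncard_biUnion_eq_sum FF _ (fun x _ => Set.toFinite _) hpdisj]
  have hcount2 : (⋃₀ F).ncard = ∑ x ∈ FF, x.ncard := by
    have : ⋃₀ F = ⋃ x ∈ FF, x := by
      rw [Set.sUnion_eq_biUnion]
      ext w
      simp only [Set.mem_iUnion]
      constructor
      · rintro ⟨x, hx, hw⟩; exact ⟨x, (hmemFF x).2 hx, hw⟩
      · rintro ⟨x, hx, hw⟩; exact ⟨x, (hmemFF x).1 hx, hw⟩
    rw [this, ncard_biUnion_eq_sum FF _ (fun x _ => Set.toFinite _)
      (fun x hx y hy hxy => hdisj x ((hmemFF x).1 hx) y ((hmemFF y).1 hy) hxy)]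
  have hFcard : F.ncard = FF.card := by
    rw [hFF, Set.ncard_eq_toFinset_card]
  have hterm : ∀ x ∈ FF, (Ts x).edgeSet.ncard + 1 = x.ncard := by
    intro x hx
    exact spanningTree_edge_count (hTs x ((hmemFF x).1 hx))
  have : ∑ x ∈ FF, x.ncard = (∑ x ∈ FF, (Ts x).edgeSet.ncard) + FF.card := by
    rw [← Finset.sum_congr rfl hterm, Finset.sum_add_distrib, Finset.sum_const, smul_eq_mul,
      mul_one]
  omega


include hverts hAdj hne hdisj hTs hR in
lemma glue_spanning (hFne : F.Nonempty)
    (hconn : ∀ x ∈ F, ∀ y ∈ F, Relation.ReflTransGen (stepRel G F R) x y)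
    (hcard : R.ncard + 1 ≤ F.ncard) :
    IsSpanningTreeOf G TT (ind G (⋃₀ F)) := by
  classical
  refine ⟨glue_le hverts hAdj hTs hR, hverts, ?_⟩
  -- nonempty
  obtain ⟨x0, hx0⟩ := hFne
  obtain ⟨u0, hu0⟩ := hne x0 hx0
  haveI : Nonempty ↥TT.verts := ⟨⟨u0, by rw [hverts]; exact ⟨x0, hx0, hu0⟩⟩⟩
  haveI : Fintype ↥TT.verts := Fintype.ofFinite _
  -- connected
  have hpre : TT.coe.Preconnected := by
    rintro ⟨u, hu⟩ ⟨v, hv⟩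
    have hu' : u ∈ ⋃₀ F := by rw [← hverts]; exact hu
    have hv' : v ∈ ⋃₀ F := by rw [← hverts]; exact hv
    obtain ⟨x, hx, hux⟩ := hu'
    obtain ⟨y, hy, hvy⟩ := hv'
    exact glue_reach_step hverts hAdj hTs (hconn x hx y hy) hy hu hv hux hvy
  have hconn' : TT.coe.Connected := ⟨hpre⟩
  -- counting
  apply isTree_of_connected_of_ncard_le hconn'
  rw [ncard_coe_edgeSet]
  have hcnt := glue_edge_count hverts hAdj hne hdisj hTs hR
  have hcard' : Fintype.card ↥TT.verts = (⋃₀ F).ncard := by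
    rw [← Nat.card_eq_fintype_card, Nat.card_coe_set_eq, hverts]
  omega

end GlueHyps

end Glue

section Quot

variable {κ : Type*} (G : SimpleGraph V) (s : Set V) (f : V → κ)

/-- The quotient graph of the pieces of `s` under the classification `f`. -/
def quotGraph : SimpleGraph ↥(f '' s) where
  Adj k l := k ≠ l ∧ ∃ u v, u ∈ s ∧ v ∈ s ∧ f u = k.1 ∧ f v = l.1 ∧ G.Adj u v
  symm := by
    refine ⟨?_⟩
    rintro k l ⟨hne, u, v, hu, hv, hfu, hfv, hadj⟩
    exact ⟨hne.symm, v, u, hv, hu, hfv, hfu, hadj.symm⟩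
  loopless := ⟨by rintro k ⟨hne, -⟩; exact hne rfl⟩

variable {G s f}

lemma quotGraph_adj_of {u v : V} (hu : u ∈ s) (hv : v ∈ s) (hadj : G.Adj u v)
    (hne : f u ≠ f v) :
    (quotGraph G s f).Adj ⟨f u, ⟨u, hu, rfl⟩⟩ ⟨f v, ⟨v, hv, rfl⟩⟩ := by
  refine ⟨fun h => hne (congrArg Subtype.val h), u, v, hu, hv, rfl, rfl, hadj⟩

lemma quotGraph_reach (hconn : (ind G s).Connected) {u v : V} (hu : u ∈ s) (hv : v ∈ s) :
    (quotGraph G s f).Reachable ⟨f u, ⟨u, hu, rfl⟩⟩ ⟨f v, ⟨v, hv, rfl⟩⟩ := by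
  have hcoe : (ind G s).coe.Connected := hconn
  suffices h : ∀ a b : ↥(ind G s).verts, (ind G s).coe.Reachable a b →
      (quotGraph G s f).Reachable ⟨f a.1, ⟨a.1, a.2, rfl⟩⟩ ⟨f b.1, ⟨b.1, b.2, rfl⟩⟩ by
    exact h ⟨u, hu⟩ ⟨v, hv⟩ (hcoe.preconnected _ _)
  rintro a b ⟨p⟩
  induction p with
  | @nil a =>
    exact Reachable.refl _
  | @cons a b c hab p ih =>
    have hGab : G.Adj a.1 b.1 := (ind G s).coe_adj_sub _ _ hab
    by_cases h : f a.1 = f b.1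
    · have : (⟨f a.1, ⟨a.1, a.2, rfl⟩⟩ : ↥(f '' s)) = ⟨f b.1, ⟨b.1, b.2, rfl⟩⟩ :=
        Subtype.ext h
      rw [this]
      exact ih
    · exact (quotGraph_adj_of a.2 b.2 hGab h).reachable.trans ih

/-- The defining property of a liftable quotient edge. -/
def QEdgeProp (e : Sym2 ↥(f '' s)) : Prop :=
  ∃ u v : V, u ∈ s ∧ v ∈ s ∧ G.Adj u v ∧ f u ≠ f v ∧
    Sym2.map Subtype.val e = s(f u, f v)

lemma qEdgeProp_of_mem {Q' : SimpleGraph ↥(f '' s)} (hle : Q' ≤ quotGraph G s f)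
    {e : Sym2 ↥(f '' s)} (he : e ∈ Q'.edgeSet) : QEdgeProp (G := G) (s := s) (f := f) e := by
  induction e with
  | _ k l =>
    obtain ⟨hne, u, v, hu, hv, hfu, hfv, hadj⟩ := hle he
    refine ⟨u, v, hu, hv, hadj, ?_, ?_⟩
    · intro h
      apply hne
      apply Subtype.ext
      rw [← hfu, ← hfv, h]
    · simp only [Sym2.map_pair_eq, hfu, hfv]

variable [Nonempty V]

open Classical in
/-- Choose a concrete cross edge for each quotient edge. -/
noncomputable def pickE (G : SimpleGraph V) (s : Set V) (f : V → κ)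
    (e : Sym2 ↥(f '' s)) : Sym2 V :=
  if h : QEdgeProp (G := G) (s := s) (f := f) e then
    s(h.choose, h.choose_spec.choose)
  else s(Classical.arbitrary V, Classical.arbitrary V)

lemma pickE_spec {e : Sym2 ↥(f '' s)} (h : QEdgeProp (G := G) (s := s) (f := f) e) :
    ∃ u v : V, pickE G s f e = s(u, v) ∧ u ∈ s ∧ v ∈ s ∧ G.Adj u v ∧ f u ≠ f v ∧
      Sym2.map Subtype.val e = s(f u, f v) := by
  rw [pickE, dif_pos h]
  obtain ⟨hu, hv, hadj, hne, hmap⟩ := h.choose_spec.choose_spec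
  exact ⟨h.choose, h.choose_spec.choose, rfl, hu, hv, hadj, hne, hmap⟩

/-- the piece of `k` -/
def pieceOf (s : Set V) (f : V → κ) (k : κ) : Set V := s ∩ f ⁻¹' {k}

/-- the family of pieces -/
def pieceFam (s : Set V) (f : V → κ) : Set (Set V) :=
  {x | ∃ k ∈ f '' s, x = pieceOf s f k}

/-- The set of chosen representative edges of a quotient subgraph. -/
noncomputable def pickSet (G : SimpleGraph V) (s : Set V) (f : V → κ)
    (Q' : SimpleGraph ↥(f '' s)) : Set (Sym2 V) :=
  pickE G s f '' Q'.edgeSet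

lemma pickSet_ncard_le (Q' : SimpleGraph ↥(f '' s)) :
    (pickSet G s f Q').ncard ≤ Q'.edgeSet.ncard :=
  Set.ncard_image_le (Set.toFinite _)

lemma pickSet_shape {Q' : SimpleGraph ↥(f '' s)} (hle : Q' ≤ quotGraph G s f)
    {e' : Sym2 V} (he' : e' ∈ pickSet G s f Q') :
    ∃ u v, e' = s(u, v) ∧ G.Adj u v ∧ (pieceOf s f (f u)) ∈ pieceFam s f ∧
      (pieceOf s f (f v)) ∈ pieceFam s f ∧ pieceOf s f (f u) ≠ pieceOf s f (f v) ∧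
      u ∈ pieceOf s f (f u) ∧ v ∈ pieceOf s f (f v) := by
  obtain ⟨e, he, rfl⟩ := he'
  obtain ⟨u, v, heq, hu, hv, hadj, hne, -⟩ := pickE_spec (qEdgeProp_of_mem hle he)
  refine ⟨u, v, heq, hadj, ⟨f u, ⟨u, hu, rfl⟩, rfl⟩, ⟨f v, ⟨v, hv, rfl⟩, rfl⟩, ?_,
    ⟨hu, rfl⟩, ⟨hv, rfl⟩⟩
  intro h
  have : u ∈ pieceOf s f (f v) := h ▸ ⟨hu, rfl⟩
  exact hne this.2

lemma pickSet_step {Q' : SimpleGraph ↥(f '' s)} (hle : Q' ≤ quotGraph G s f)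
    {F : Set (Set V)} (hF : pieceFam s f ⊆ F) {R : Set (Sym2 V)}
    (hR : pickSet G s f Q' ⊆ R) {k l : ↥(f '' s)} (hkl : Q'.Adj k l) :
    stepRel G F R (pieceOf s f k.1) (pieceOf s f l.1) := by
  have he : s(k, l) ∈ Q'.edgeSet := hkl
  obtain ⟨u, v, heq, hu, hv, hadj, hne, hmap⟩ := pickE_spec (qEdgeProp_of_mem hle he)
  have hmem : pickE G s f s(k, l) ∈ R := hR ⟨s(k, l), he, rfl⟩
  rw [heq] at hmem
  have hk : (k.1 : κ) ∈ f '' s := k.2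
  have hl : (l.1 : κ) ∈ f '' s := l.2
  refine ⟨hF ⟨k.1, hk, rfl⟩, hF ⟨l.1, hl, rfl⟩, ?_⟩
  rw [Sym2.map_pair_eq, Sym2.eq_iff] at hmap
  rcases hmap with ⟨h1, h2⟩ | ⟨h1, h2⟩
  · exact ⟨u, v, ⟨hu, h1.symm⟩, ⟨hv, h2.symm⟩, hmem, hadj⟩
  · refine ⟨v, u, ⟨hv, h1.symm⟩, ⟨hu, h2.symm⟩, ?_, hadj.symm⟩
    rwa [Sym2.eq_swap]

lemma pickSet_chain {Q' : SimpleGraph ↥(f '' s)} (hle : Q' ≤ quotGraph G s f)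
    {F : Set (Set V)} (hF : pieceFam s f ⊆ F) {R : Set (Sym2 V)}
    (hR : pickSet G s f Q' ⊆ R) {k l : ↥(f '' s)} (hkl : Q'.Reachable k l) :
    Relation.ReflTransGen (stepRel G F R) (pieceOf s f k.1) (pieceOf s f l.1) := by
  obtain ⟨p⟩ := hkl
  induction p with
  | nil => exact Relation.ReflTransGen.refl
  | @cons a b c hab p ih =>
    exact Relation.ReflTransGen.head (pickSet_step hle hF hR hab) ih

lemma pieceFam_nonempty {s : Set V} {f : V → κ} : ∀ x ∈ pieceFam s f, x.Nonempty := by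
  rintro x ⟨k, ⟨u, hu, rfl⟩, rfl⟩
  exact ⟨u, hu, rfl⟩

lemma pieceFam_disjoint {s : Set V} {f : V → κ} :
    ∀ x ∈ pieceFam s f, ∀ y ∈ pieceFam s f, x ≠ y → Disjoint x y := by
  rintro x ⟨k, hk, rfl⟩ y ⟨l, hl, rfl⟩ hxy
  rw [Set.disjoint_left]
  intro u hux huy
  apply hxy
  have h1 : f u = k := hux.2
  have h2 : f u = l := huy.2
  rw [← h1, ← h2]

lemma sUnion_pieceFam {s : Set V} {f : V → κ} : ⋃₀ pieceFam s f = s := by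
  apply Set.Subset.antisymm
  · rintro u ⟨x, ⟨k, hk, rfl⟩, hu⟩
    exact hu.1
  · intro u hu
    exact ⟨pieceOf s f (f u), ⟨f u, ⟨u, hu, rfl⟩, rfl⟩, hu, rfl⟩

lemma pieceFam_eq_image {s : Set V} {f : V → κ} :
    pieceFam s f = (pieceOf s f) '' (f '' s) := by
  ext x
  simp only [pieceFam, Set.mem_setOf_eq, Set.mem_image]
  constructor
  · rintro ⟨k, hk, rfl⟩
    exact ⟨k, hk, rfl⟩
  · rintro ⟨k, hk, rfl⟩
    exact ⟨k, hk, rfl⟩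

lemma pieceFam_ncard {s : Set V} {f : V → κ} :
    (pieceFam s f).ncard = (f '' s).ncard := by
  rw [pieceFam_eq_image]
  apply Set.ncard_image_of_injOn
  rintro k ⟨u, hu, rfl⟩ l hl heq
  have : u ∈ pieceOf s f l := heq ▸ ⟨hu, rfl⟩
  exact this.2

lemma pieceFam_mem_nonempty {s : Set V} {f : V → κ} {x : Set V} (hx : x ∈ pieceFam s f) :
    ∃ k ∈ f '' s, x = pieceOf s f k := hx

end Quot

/-- For a hierarchically connected plan `ξ` of a connected graph `G` and a
connected component `𝒞` of its administrative adjacency graph with region set `S`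
satisfying `Split(S) = |S| - 1`, there is a tree `T` on `⋃_{G_k ∈ S} V(G_k)` whose
restriction to each region of `S` is an `η`-hierarchical tree on that region and which
is itself an `η`-hierarchical tree on the merged region. -/
theorem stmt_16 {A : Type*} [Fintype A] (G : SimpleGraph V) (η : V → A)
    (hG : G.Connected) (r : ℕ) (ξ : Plan G r)
    (hhc : ∀ B ∈ ξ.blocks, HierConnectedBlock G η B)
    (S : Set (Set V)) (hS : IsAdminComponent G η ξ.blocks S)
    (hsplit : splits G η S = S.ncard - 1) :
    ∃ T : G.Subgraph,
      (∀ B ∈ S, IsHierTree G η (T.induce B) B) ∧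
      IsHierTree G η T (⋃₀ S) := by
  classical
  obtain ⟨hSsub, hSne, hSconn, hSmax⟩ := hS
  -- ambient notation
  set W : Set V := ⋃₀ S with hW
  obtain ⟨B₀, hB₀⟩ := hSne
  obtain ⟨v₀, hv₀⟩ := ξ.blocks_nonempty B₀ (hSsub hB₀)
  haveI : Nonempty V := ⟨v₀⟩
  -- the block containing a vertex
  have hblockex : ∀ v : V, ∃ B ∈ ξ.blocks, v ∈ B := ξ.blocks_cover
  set blockOf : V → Set V := fun v => (hblockex v).choose with hblockOf
  have hbm : ∀ v, blockOf v ∈ ξ.blocks ∧ v ∈ blockOf v := by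
    intro v
    exact ⟨(hblockex v).choose_spec.1, (hblockex v).choose_spec.2⟩
  have hbeq : ∀ {v : V} {B : Set V}, B ∈ ξ.blocks → v ∈ B → blockOf v = B := by
    intro v B hB hv
    by_contra hne
    exact Set.disjoint_left.1
      (ξ.blocks_disjoint _ (hbm v).1 _ hB hne) (hbm v).2 hv
  have hbS : ∀ {v : V}, v ∈ W → blockOf v ∈ S := by
    rintro v ⟨B, hB, hv⟩
    rwa [hbeq (hSsub hB) hv]
  -- administrative units of W
  set sa : A → Set V := fun a => W ∩ η ⁻¹' {a} with hsa
  set UA : Set A := {a | (sa a).Nonempty} with hUA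
  -- the family of all pieces
  set Fall : Set (Set V) := {x | ∃ B ∈ S, ∃ a : A, x = B ∩ η ⁻¹' {a} ∧ x.Nonempty}
    with hFall
  have hFallW : ∀ x ∈ Fall, x ⊆ W := by
    rintro x ⟨B, hB, a, rfl, -⟩ u hu
    exact ⟨B, hB, hu.1⟩
  have hFallne : ∀ x ∈ Fall, x.Nonempty := by
    rintro x ⟨B, hB, a, rfl, hne⟩
    exact hne
  have hFalldisj : ∀ x ∈ Fall, ∀ y ∈ Fall, x ≠ y → Disjoint x y := by
    rintro x ⟨B, hB, a, rfl, hxne⟩ y ⟨B', hB', a', rfl, hyne⟩ hxy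
    rw [Set.disjoint_left]
    intro u hux huy
    apply hxy
    have hBB' : B = B' := by
      by_contra h
      exact Set.disjoint_left.1
        (ξ.blocks_disjoint _ (hSsub hB) _ (hSsub hB') h) hux.1 huy.1
    have haa' : a = a' := by
      have h1 : η u = a := hux.2
      have h2 : η u = a' := huy.2
      rw [← h1, h2]
    rw [hBB', haa']
  have hWFall : W = ⋃₀ Fall := by
    apply Set.Subset.antisymm
    · rintro v ⟨B, hB, hv⟩
      exact ⟨B ∩ η ⁻¹' {η v}, ⟨B, hB, η v, rfl, ⟨v, hv, rfl⟩⟩, hv, rfl⟩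
    · rintro v ⟨x, hx, hv⟩
      exact hFallW x hx hv
  -- pieces are connected, and have spanning trees
  have hFallconn : ∀ x ∈ Fall, (ind G x).Connected := by
    rintro x ⟨B, hB, a, rfl, hne⟩
    rw [Subgraph.connected_iff']
    rw [connected_iff]
    refine ⟨hhc B (hSsub hB) a, ?_⟩
    obtain ⟨w, hw⟩ := hne
    exact ⟨⟨w, hw⟩⟩
  set Ts : Set V → G.Subgraph := fun x =>
    if h : (ind G x).Connected then (exists_spanning_tree_ind h).choose else ⊥ with hTsdef
  have hTsspec : ∀ x ∈ Fall, IsSpanningTreeOf G (Ts x) (ind G x) := by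
    intro x hx
    have h := hFallconn x hx
    simp only [hTsdef, dif_pos h]
    exact (exists_spanning_tree_ind h).choose_spec
  -- region-level quotient trees
  have hpfB : ∀ B ∈ S, pieceFam B η ⊆ Fall := by
    rintro B hB x ⟨a, ⟨u, hu, rfl⟩, rfl⟩
    exact ⟨B, hB, η u, rfl, ⟨u, hu, rfl⟩⟩
  have hex1 : ∀ B ∈ S, ∃ T' : SimpleGraph ↥(η '' B), T' ≤ quotGraph G B η ∧ T'.IsTree := by
    intro B hB
    haveI : Fintype ↥(η '' B) := Fintype.ofFinite _
    obtain ⟨u, hu⟩ := ξ.blocks_nonempty B (hSsub hB)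
    haveI : Nonempty ↥(η '' B) := ⟨⟨η u, ⟨u, hu, rfl⟩⟩⟩
    apply Connected.exists_spanning_tree
    rw [connected_iff]
    refine ⟨?_, inferInstance⟩
    rintro ⟨k, u, hu, rfl⟩ ⟨l, v, hv, rfl⟩
    exact quotGraph_reach (ξ.blocks_connected B (hSsub hB)) hu hv
  set RB : Set V → Set (Sym2 V) := fun B =>
    if h : B ∈ S then pickSet G B η (hex1 B h).choose else ∅ with hRBdef
  have hRBeq : ∀ B (h : B ∈ S), RB B = pickSet G B η (hex1 B h).choose := by
    intro B h
    simp only [hRBdef, dif_pos h]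
  -- unit-level quotient forests
  have hsaW : ∀ a, sa a ⊆ W := fun a => Set.inter_subset_left
  have hpiecesa : ∀ a, ∀ k ∈ blockOf '' sa a, pieceOf (sa a) blockOf k = k ∩ η ⁻¹' {a} := by
    rintro a k ⟨u, hu, rfl⟩
    ext x
    constructor
    · rintro ⟨⟨hxW, hxa⟩, hxb⟩
      refine ⟨?_, hxa⟩
      rw [← hxb]
      exact (hbm x).2
    · rintro ⟨hxk, hxa⟩
      have hbx : blockOf x = blockOf u := by
        rw [hbeq (hbm u).1 hxk]
      refine ⟨⟨?_, hxa⟩, hbx⟩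
      have : blockOf u ∈ S := hbS hu.1
      exact ⟨blockOf u, this, hxk⟩
  have hpfA : ∀ a ∈ UA, pieceFam (sa a) blockOf ⊆ Fall := by
    rintro a ha x ⟨k, hk, rfl⟩
    rw [hpiecesa a k hk]
    obtain ⟨u, hu, rfl⟩ := hk
    refine ⟨blockOf u, hbS hu.1, a, rfl, ⟨u, ⟨(hbm u).2, hu.2⟩⟩⟩
  have hex2 : ∀ a ∈ UA, ∃ F' : SimpleGraph ↥(blockOf '' sa a),
      F' ≤ quotGraph G (sa a) blockOf ∧ F'.IsAcyclic ∧
      (∀ k l, F'.Reachable k l ↔ (quotGraph G (sa a) blockOf).Reachable k l) := by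
    intro a ha
    haveI : Fintype ↥(blockOf '' sa a) := Fintype.ofFinite _
    obtain ⟨F', h1, h2, h3⟩ := exists_spanning_forest (quotGraph G (sa a) blockOf)
    exact ⟨F', h1, h2, h3⟩
  set Ra : A → Set (Sym2 V) := fun a =>
    if h : a ∈ UA then pickSet G (sa a) blockOf (hex2 a h).choose else ∅ with hRadef
  have hRaeq : ∀ a (h : a ∈ UA), Ra a = pickSet G (sa a) blockOf (hex2 a h).choose := by
    intro a h
    simp only [hRadef, dif_pos h]
  -- the full set of linking edges
  set Rall : Set (Sym2 V) := (⋃ B ∈ S, RB B) ∪ (⋃ a ∈ UA, Ra a) with hRall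
  -- shapes of linking edges
  have hRBshape : ∀ B (hB : B ∈ S), ∀ e ∈ RB B, ∃ u v, e = s(u, v) ∧ G.Adj u v ∧
      u ∈ B ∧ v ∈ B ∧ η u ≠ η v := by
    intro B hB e he
    rw [hRBeq B hB] at he
    obtain ⟨u, v, heq, hadj, -, -, hnepc, hu, hv⟩ :=
      pickSet_shape (hex1 B hB).choose_spec.1 he
    refine ⟨u, v, heq, hadj, hu.1, hv.1, ?_⟩
    intro h
    apply hnepc
    rw [h]
  have hRashape : ∀ a (ha : a ∈ UA), ∀ e ∈ Ra a, ∃ u v, e = s(u, v) ∧ G.Adj u v ∧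
      u ∈ sa a ∧ v ∈ sa a ∧ blockOf u ≠ blockOf v ∧ η u = a ∧ η v = a := by
    intro a ha e he
    rw [hRaeq a ha] at he
    obtain ⟨u, v, heq, hadj, -, -, hnepc, hu, hv⟩ :=
      pickSet_shape (hex2 a ha).choose_spec.1 he
    refine ⟨u, v, heq, hadj, hu.1, hv.1, ?_, hu.1.2, hv.1.2⟩
    intro h
    apply hnepc
    rw [h]
  have hRallshape : ∀ e ∈ Rall, ∃ u v x y, e = s(u, v) ∧ G.Adj u v ∧ x ∈ Fall ∧
      y ∈ Fall ∧ x ≠ y ∧ u ∈ x ∧ v ∈ y := by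
    intro e he
    rw [hRall] at he
    rcases he with he | he
    · simp only [Set.mem_iUnion] at he
      obtain ⟨B, hB, he⟩ := he
      obtain ⟨u, v, heq, hadj, hu, hv, hne⟩ := hRBshape B hB e he
      refine ⟨u, v, B ∩ η ⁻¹' {η u}, B ∩ η ⁻¹' {η v}, heq, hadj,
        ⟨B, hB, η u, rfl, ⟨u, hu, rfl⟩⟩, ⟨B, hB, η v, rfl, ⟨v, hv, rfl⟩⟩, ?_,
        ⟨hu, rfl⟩, ⟨hv, rfl⟩⟩
      intro h
      have : u ∈ B ∩ η ⁻¹' {η v} := h ▸ ⟨hu, rfl⟩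
      exact hne this.2
    · simp only [Set.mem_iUnion] at he
      obtain ⟨a, ha, he⟩ := he
      obtain ⟨u, v, heq, hadj, hu, hv, hbne, hua, hva⟩ := hRashape a ha e he
      have huB : u ∈ blockOf u := (hbm u).2
      have hvB : v ∈ blockOf v := (hbm v).2
      refine ⟨u, v, blockOf u ∩ η ⁻¹' {a}, blockOf v ∩ η ⁻¹' {a}, heq, hadj,
        ⟨blockOf u, hbS hu.1, a, rfl, ⟨u, huB, hua⟩⟩,
        ⟨blockOf v, hbS hv.1, a, rfl, ⟨v, hvB, hva⟩⟩, ?_, ⟨huB, hua⟩, ⟨hvB, hva⟩⟩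
      intro h
      have : u ∈ blockOf v ∩ η ⁻¹' {a} := h ▸ ⟨huB, hua⟩
      exact hbne (hbeq (hbm v).1 this.1)
  -- adjacency facts for pieces
  have hTsadj : ∀ x ∈ Fall, ∀ u v : V, (Ts x).Adj u v → u ∈ x ∧ v ∈ x ∧ G.Adj u v := by
    intro x hx u v h
    have := (hTsspec x hx).1.2 h
    exact ⟨this.1, this.2.1, this.2.2⟩
  -- the glued subgraph
  set TT : G.Subgraph :=
    { verts := W
      Adj := fun u v => (∃ x ∈ Fall, (Ts x).Adj u v) ∨ (s(u, v) ∈ Rall ∧ G.Adj u v)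
      adj_sub := by
        rintro u v (⟨x, hx, h⟩ | ⟨-, h⟩)
        · exact (hTsadj x hx u v h).2.2
        · exact h
      edge_vert := by
        rintro u v (⟨x, hx, h⟩ | ⟨hR, hG⟩)
        · exact hFallW x hx (hTsadj x hx u v h).1
        · obtain ⟨p, q, x, y, heq, -, hx, hy, -, hp, hq⟩ := hRallshape _ hR
          rw [Sym2.eq_iff] at heq
          rcases heq with ⟨rfl, rfl⟩ | ⟨rfl, rfl⟩
          · exact hFallW x hx hp
          · exact hFallW y hy hq
      symm := by
        refine ⟨?_⟩
        rintro u v (⟨x, hx, h⟩ | ⟨hR, hG⟩)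
        · exact Or.inl ⟨x, hx, h.symm⟩
        · refine Or.inr ⟨?_, hG.symm⟩
          rwa [Sym2.eq_swap] } with hTT
  have hTTverts : TT.verts = W := rfl
  have hTTadj : ∀ u v, TT.Adj u v ↔
      (∃ x ∈ Fall, (Ts x).Adj u v) ∨ (s(u, v) ∈ Rall ∧ G.Adj u v) := fun u v => Iff.rfl
  -- chains within one block
  have hpfmem : ∀ B, ∀ b : A, (B ∩ η ⁻¹' {b}).Nonempty → B ∩ η ⁻¹' {b} ∈ pieceFam B η := by
    rintro B b ⟨w, hw⟩
    exact ⟨b, ⟨w, hw.1, hw.2⟩, rfl⟩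
  have hRBsub : ∀ B ∈ S, RB B ⊆ Rall := by
    intro B hB
    rw [hRall]
    intro e he
    exact Or.inl (Set.mem_biUnion hB he)
  have hRasub : ∀ a ∈ UA, Ra a ⊆ Rall := by
    intro a ha
    rw [hRall]
    intro e he
    exact Or.inr (Set.mem_biUnion ha he)
  have hchainB : ∀ B ∈ S, ∀ x ∈ pieceFam B η, ∀ y ∈ pieceFam B η,
      Relation.ReflTransGen (stepRel G Fall Rall) x y := by
    rintro B hB x ⟨k, hk, rfl⟩ y ⟨l, hl, rfl⟩
    have hle := (hex1 B hB).choose_spec.1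
    have htree := (hex1 B hB).choose_spec.2
    have hreach : (hex1 B hB).choose.Reachable ⟨k, hk⟩ ⟨l, hl⟩ :=
      htree.isConnected.preconnected _ _
    have hsub : pickSet G B η (hex1 B hB).choose ⊆ Rall := by
      rw [← hRBeq B hB]; exact hRBsub B hB
    exact pickSet_chain hle (hpfB B hB) hsub hreach
  -- an administrative adjacency gives a unit-level step
  have hstepA : ∀ B ∈ S, ∀ B' ∈ S, ∀ a : A, ∀ u v : V, G.Adj u v →
      u ∈ B ∩ η ⁻¹' {a} → v ∈ B' ∩ η ⁻¹' {a} →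
      Relation.ReflTransGen (stepRel G Fall Rall) (B ∩ η ⁻¹' {a}) (B' ∩ η ⁻¹' {a}) := by
    intro B hB B' hB' a u v hadj hu hv
    by_cases hBB : B = B'
    · rw [hBB]
    · have husa : u ∈ sa a := ⟨⟨B, hB, hu.1⟩, hu.2⟩
      have hvsa : v ∈ sa a := ⟨⟨B', hB', hv.1⟩, hv.2⟩
      have ha : a ∈ UA := ⟨u, husa⟩
      have hbu : blockOf u = B := hbeq (hSsub hB) hu.1
      have hbv : blockOf v = B' := hbeq (hSsub hB') hv.1
      have hbne : blockOf u ≠ blockOf v := by rw [hbu, hbv]; exact hBB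
      have hQadj : (quotGraph G (sa a) blockOf).Adj ⟨blockOf u, ⟨u, husa, rfl⟩⟩
          ⟨blockOf v, ⟨v, hvsa, rfl⟩⟩ := quotGraph_adj_of husa hvsa hadj hbne
      have hle := (hex2 a ha).choose_spec.1
      have hreach : (hex2 a ha).choose.Reachable ⟨blockOf u, ⟨u, husa, rfl⟩⟩
          ⟨blockOf v, ⟨v, hvsa, rfl⟩⟩ :=
        ((hex2 a ha).choose_spec.2.2 _ _).2 hQadj.reachable
      have hsub : pickSet G (sa a) blockOf (hex2 a ha).choose ⊆ Rall := by
        rw [← hRaeq a ha]; exact hRasub a ha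
      have hchain := pickSet_chain hle (hpfA a ha) hsub hreach
      have h1 : pieceOf (sa a) blockOf (blockOf u) = B ∩ η ⁻¹' {a} := by
        rw [hpiecesa a (blockOf u) ⟨u, husa, rfl⟩, hbu]
      have h2 : pieceOf (sa a) blockOf (blockOf v) = B' ∩ η ⁻¹' {a} := by
        rw [hpiecesa a (blockOf v) ⟨v, hvsa, rfl⟩, hbv]
      rw [h1, h2] at hchain
      exact hchain
  -- global chains
  have hchainGlob : ∀ x ∈ Fall, ∀ y ∈ Fall,
      Relation.ReflTransGen (stepRel G Fall Rall) x y := by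
    rintro x ⟨B, hB, a, rfl, hxne⟩ y ⟨B', hB', a', rfl, hyne⟩
    have hadm := hSconn B hB B' hB'
    clear hB
    induction hadm using Relation.ReflTransGen.head_induction_on generalizing a with
    | refl =>
      exact hchainB B' hB' _ (hpfmem B' a hxne) _ (hpfmem B' a' hyne)
    | @head C D hCD hDB' ih =>
      obtain ⟨hC, hD, a0, u, v, hadj, hu, hv⟩ := hCD
      have h1 : Relation.ReflTransGen (stepRel G Fall Rall)
          (C ∩ η ⁻¹' {a}) (C ∩ η ⁻¹' {a0}) :=
        hchainB C hC _ (hpfmem C a hxne) _ (hpfmem C a0 ⟨u, hu⟩)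
      have h2 := hstepA C hC D hD a0 u v hadj hu hv
      have h3 := ih a0 ⟨v, hv⟩
      exact (h1.trans h2).trans h3
  -- ===== counting =====
  set SS : Finset (Set V) := (Set.toFinite S).toFinset with hSS
  have hmemSS : ∀ B, B ∈ SS ↔ B ∈ S := fun B => Set.Finite.mem_toFinset _
  set uB : Set V → Finset A := fun B =>
    Finset.univ.filter (fun a : A => (B ∩ η ⁻¹' {a}).Nonempty) with huB
  have hmemuB : ∀ B a, a ∈ uB B ↔ (B ∩ η ⁻¹' {a}).Nonempty := by
    intro B a
    simp [huB]
  set UU : Finset A := Finset.univ.filter (fun a : A => (sa a).Nonempty) with hUU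
  have hmemUU : ∀ a, a ∈ UU ↔ a ∈ UA := by
    intro a
    simp [hUU, hUA]
  set regA : A → Finset (Set V) := fun a =>
    SS.filter (fun B => (B ∩ η ⁻¹' {a}).Nonempty) with hregA
  have hmemregA : ∀ a B, B ∈ regA a ↔ B ∈ S ∧ (B ∩ η ⁻¹' {a}).Nonempty := by
    intro a B
    simp [hregA, Finset.mem_filter, hmemSS]
  set PF2 : Finset (Set V × A) :=
    SS.biUnion (fun B => (uB B).image (fun a => (B, a))) with hPF2
  have hmemPF2 : ∀ p : Set V × A, p ∈ PF2 ↔ p.1 ∈ S ∧ (p.1 ∩ η ⁻¹' {p.2}).Nonempty := by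
    rintro ⟨B, a⟩
    simp only [hPF2, Finset.mem_biUnion, Finset.mem_image, hmemSS, hmemuB, Prod.mk.injEq]
    constructor
    · rintro ⟨B', hB', a', ha', rfl, rfl⟩
      exact ⟨hB', ha'⟩
    · rintro ⟨hB, ha⟩
      exact ⟨B, hB, a, ha, rfl, rfl⟩
  have hcard1 : PF2.card = ∑ B ∈ SS, (uB B).card := by
    rw [hPF2, Finset.card_biUnion]
    · refine Finset.sum_congr rfl (fun B hB => ?_)
      exact Finset.card_image_of_injective _ (fun a a' h => (Prod.ext_iff.1 h).2)
    · intro B hB B' hB' hne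
      rw [Function.onFun_apply, Finset.disjoint_left]
      rintro ⟨C, c⟩ h1 h2
      simp only [Finset.mem_image, Prod.mk.injEq] at h1 h2
      obtain ⟨a, -, rfl, -⟩ := h1
      obtain ⟨a', -, rfl, -⟩ := h2
      exact hne rfl
  have hcard2 : PF2.card = ∑ a ∈ UU, (regA a).card := by
    have hrw : PF2 = UU.biUnion (fun a => (regA a).image (fun B => (B, a))) := by
      ext ⟨B, a⟩
      rw [hmemPF2]
      simp only [Finset.mem_biUnion, Finset.mem_image, hmemUU, hmemregA, Prod.mk.injEq]
      constructor
      · rintro ⟨hB, w, hw⟩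
        refine ⟨a, ⟨w, ⟨B, hB, hw.1⟩, hw.2⟩, B, ⟨hB, w, hw⟩, rfl, rfl⟩
      · rintro ⟨a', -, B', hB', rfl, rfl⟩
        exact hB'
    rw [hrw, Finset.card_biUnion]
    · refine Finset.sum_congr rfl (fun a ha => ?_)
      exact Finset.card_image_of_injective _ (fun B B' h => (Prod.ext_iff.1 h).1)
    · intro a ha a' ha' hne
      rw [Function.onFun_apply, Finset.disjoint_left]
      rintro ⟨C, c⟩ h1 h2
      simp only [Finset.mem_image, Prod.mk.injEq] at h1 h2
      obtain ⟨B, -, rfl, rfl⟩ := h1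
      obtain ⟨B', -, -, h⟩ := h2
      exact hne h.symm
  -- number of components of a piece
  have hnum : ∀ B ∈ S, ∀ a : A,
      numComponents G (B ∩ η ⁻¹' {a}) = if (B ∩ η ⁻¹' {a}).Nonempty then 1 else 0 := by
    intro B hB a
    by_cases h : (B ∩ η ⁻¹' {a}).Nonempty
    · rw [if_pos h, numComponents]
      rw [Nat.card_eq_one_iff_unique]
      obtain ⟨w, hw⟩ := h
      have hpre : (ind G (B ∩ η ⁻¹' {a})).coe.Preconnected := hhc B (hSsub hB) a
      constructor
      · constructor
        intro c d
        refine SimpleGraph.ConnectedComponent.ind₂ (fun x y => ?_) c d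
        exact SimpleGraph.ConnectedComponent.sound (hpre x y)
      · exact ⟨SimpleGraph.connectedComponentMk _ ⟨w, hw⟩⟩
    · rw [if_neg h, numComponents]
      rw [Set.not_nonempty_iff_eq_empty] at h
      haveI : IsEmpty ↥((ind G (B ∩ η ⁻¹' {a})).verts) := Set.isEmpty_coe_sort.2 h
      haveI : IsEmpty ((ind G (B ∩ η ⁻¹' {a})).coe.ConnectedComponent) := by
        constructor
        intro c
        refine SimpleGraph.ConnectedComponent.ind (fun x => ?_) c
        exact isEmptyElim x
      exact Nat.card_of_isEmpty
  have hsplits : PF2.card - UU.card = S.ncard - 1 := by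
    have h1 : (∑ᶠ a : A, ∑ᶠ B ∈ S, numComponents G (B ∩ η ⁻¹' {a})) = PF2.card := by
      have hinner : ∀ a : A, (∑ᶠ B ∈ S, numComponents G (B ∩ η ⁻¹' {a}))
          = (regA a).card := by
        intro a
        have hcoe : S = ↑SS := (Set.Finite.coe_toFinset _).symm
        rw [hcoe, finsum_mem_coe_finset]
        rw [Finset.sum_congr rfl (fun B hB => hnum B ((hmemSS B).1 hB) a)]
        rw [Finset.sum_boole]
        simp [hregA]
      rw [finsum_eq_sum_of_fintype]
      rw [Finset.sum_congr rfl (fun a _ => hinner a)]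
      rw [hcard2]
      symm
      apply Finset.sum_subset (Finset.subset_univ UU)
      intro a ha hnaUU
      rw [Finset.card_eq_zero]
      rw [Finset.eq_empty_iff_forall_notMem]
      intro B hBa
      rw [hmemregA] at hBa
      apply hnaUU
      rw [hmemUU]
      obtain ⟨w, hw⟩ := hBa.2
      exact ⟨w, ⟨B, hBa.1, hw.1⟩, hw.2⟩
    have h2 : {a : A | ∃ B ∈ S, (B ∩ η ⁻¹' {a}).Nonempty}.ncard = UU.card := by
      have : {a : A | ∃ B ∈ S, (B ∩ η ⁻¹' {a}).Nonempty} = ↑UU := by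
        ext a
        simp only [Set.mem_setOf_eq, Finset.coe_filter, hUU, Finset.mem_univ, true_and,
          Set.mem_setOf_eq]
        constructor
        · rintro ⟨B, hB, w, hw⟩
          exact ⟨w, ⟨B, hB, hw.1⟩, hw.2⟩
        · rintro ⟨w, ⟨B, hB, hwB⟩, hwa⟩
          exact ⟨B, hB, w, ⟨hwB, hwa⟩⟩
      rw [this, Set.ncard_coe_finset]
    rw [splits, h1, h2] at hsplit
    exact hsplit
  have hSScard : S.ncard = SS.card := Set.ncard_eq_toFinset_card _
  have hSS1 : 1 ≤ SS.card := Finset.card_pos.2 ⟨B₀, (hmemSS B₀).2 hB₀⟩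
  have hUUle : ∀ a ∈ UU, 1 ≤ (regA a).card := by
    intro a ha
    rw [hmemUU] at ha
    obtain ⟨u, hu⟩ := ha
    refine Finset.card_pos.2 ⟨blockOf u, ?_⟩
    rw [hmemregA]
    exact ⟨hbS hu.1, ⟨u, (hbm u).2, hu.2⟩⟩
  have hPF2geUU : UU.card ≤ PF2.card := by
    rw [hcard2]
    calc UU.card = ∑ _a ∈ UU, 1 := by rw [Finset.sum_const, smul_eq_mul, mul_one]
    _ ≤ ∑ a ∈ UU, (regA a).card := Finset.sum_le_sum hUUle
  have hKEY : PF2.card + 1 = SS.card + UU.card := by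
    rw [hSScard] at hsplits
    omega
  -- |Fall| = |PF2|
  have hFallcard : Fall.ncard = PF2.card := by
    have himg : Fall = ↑(PF2.image (fun p => p.1 ∩ η ⁻¹' {p.2})) := by
      ext x
      simp only [Finset.coe_image, Set.mem_image, Finset.mem_coe]
      constructor
      · rintro ⟨B, hB, a, rfl, hne⟩
        exact ⟨(B, a), (hmemPF2 (B, a)).2 ⟨hB, hne⟩, rfl⟩
      · rintro ⟨⟨B, a⟩, hp, rfl⟩
        rw [hmemPF2] at hp
        exact ⟨B, hp.1, a, rfl, hp.2⟩
    rw [himg, Set.ncard_coe_finset]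
    rw [Finset.card_image_of_injOn]
    intro ⟨B, a⟩ hp ⟨B', a'⟩ hp' heq
    simp only [Finset.mem_coe, hmemPF2] at hp hp'
    obtain ⟨w, hw⟩ := hp.2
    have heq' : B ∩ η ⁻¹' {a} = B' ∩ η ⁻¹' {a'} := heq
    have hw' : w ∈ B' ∩ η ⁻¹' {a'} := heq' ▸ hw
    have hBB : B = B' := by
      by_contra h
      exact Set.disjoint_left.1
        (ξ.blocks_disjoint _ (hSsub hp.1) _ (hSsub hp'.1) h) hw.1 hw'.1
    have haa : a = a' := by
      have h1 : η w = a := hw.2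
      have h2 : η w = a' := hw'.2
      rw [← h1, h2]
    rw [Prod.ext_iff]
    exact ⟨hBB, haa⟩
  -- upper bounds for the linking edge sets
  have himgB : ∀ B, (η '' B) = ↑(uB B) := by
    intro B
    ext a
    simp only [Set.mem_image, Finset.coe_filter, huB, Finset.mem_univ, true_and,
      Set.mem_setOf_eq]
    constructor
    · rintro ⟨u, hu, rfl⟩
      exact ⟨u, hu, rfl⟩
    · rintro ⟨u, hu, hua⟩
      exact ⟨u, hu, hua⟩
  have hRBcard : ∀ B (hB : B ∈ S), (RB B).ncard + 1 ≤ (uB B).card := by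
    intro B hB
    haveI : Fintype ↥(η '' B) := Fintype.ofFinite _
    have hc := isTree_ncard_edgeSet (hex1 B hB).choose_spec.2
    have hcc : Fintype.card ↥(η '' B) = (uB B).card := by
      rw [← Nat.card_eq_fintype_card, Nat.card_coe_set_eq, himgB B,
        Set.ncard_coe_finset]
    have hle := pickSet_ncard_le (G := G) (s := B) (f := η) (hex1 B hB).choose
    rw [← hRBeq B hB] at hle
    omega
  have himgA : ∀ a ∈ UA, (blockOf '' sa a) = ↑(regA a) := by
    intro a ha
    ext B
    simp only [Set.mem_image, Finset.mem_coe, hmemregA]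
    constructor
    · rintro ⟨u, hu, rfl⟩
      exact ⟨hbS hu.1, ⟨u, (hbm u).2, hu.2⟩⟩
    · rintro ⟨hB, w, hw⟩
      exact ⟨w, ⟨⟨B, hB, hw.1⟩, hw.2⟩, hbeq (hSsub hB) hw.1⟩
  have hcardA : ∀ a (ha : a ∈ UA), (Nat.card ↥(blockOf '' sa a)) = (regA a).card := by
    intro a ha
    rw [Nat.card_coe_set_eq, himgA a ha, Set.ncard_coe_finset]
  have hFaedge : ∀ a (ha : a ∈ UA),
      (hex2 a ha).choose.edgeSet.ncard + 1 ≤ (regA a).card := by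
    intro a ha
    haveI : Fintype ↥(blockOf '' sa a) := Fintype.ofFinite _
    obtain ⟨u, hu⟩ := id ha
    haveI : Nonempty ↥(blockOf '' sa a) := ⟨⟨blockOf u, ⟨u, hu, rfl⟩⟩⟩
    have := isAcyclic_ncard_le (hex2 a ha).choose_spec.2.1
    rw [← hcardA a ⟨u, hu⟩, Nat.card_eq_fintype_card]
    exact this
  have hRacard : ∀ a (ha : a ∈ UA), (Ra a).ncard + 1 ≤ (regA a).card := by
    intro a ha
    have hle := pickSet_ncard_le (G := G) (s := sa a) (f := blockOf) (hex2 a ha).choose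
    rw [← hRaeq a ha] at hle
    have := hFaedge a ha
    omega
  -- |Rall| decomposition
  have hD1 : ∀ B ∈ SS, ∀ B' ∈ SS, B ≠ B' → Disjoint (RB B) (RB B') := by
    intro B hB B' hB' hne'
    rw [Set.disjoint_left]
    intro e he he'
    obtain ⟨p, q, heq, -, hp, hq, -⟩ := hRBshape B ((hmemSS B).1 hB) e he
    obtain ⟨p', q', heq', -, hp', hq', -⟩ := hRBshape B' ((hmemSS B').1 hB') e he'
    rw [heq] at heq'
    have hpB' : p ∈ B' := by
      rw [Sym2.eq_iff] at heq'
      rcases heq' with ⟨rfl, rfl⟩ | ⟨rfl, rfl⟩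
      · exact hp'
      · exact hq'
    exact hne' (by
      by_contra h
      exact Set.disjoint_left.1
        (ξ.blocks_disjoint _ (hSsub ((hmemSS B).1 hB)) _ (hSsub ((hmemSS B').1 hB')) h)
        hp hpB')
  have hD2 : ∀ a ∈ UU, ∀ a' ∈ UU, a ≠ a' → Disjoint (Ra a) (Ra a') := by
    intro a ha a' ha' hne'
    rw [Set.disjoint_left]
    intro e he he'
    obtain ⟨p, q, heq, -, -, -, -, hpa, -⟩ := hRashape a ((hmemUU a).1 ha) e he
    obtain ⟨p', q', heq', -, -, -, -, hpa', hqa'⟩ := hRashape a' ((hmemUU a').1 ha') e he'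
    rw [heq] at heq'
    apply hne'
    rw [Sym2.eq_iff] at heq'
    rcases heq' with ⟨rfl, rfl⟩ | ⟨rfl, rfl⟩
    · rw [← hpa, hpa']
    · rw [← hpa, hqa']
  have hD3 : Disjoint (⋃ B ∈ SS, RB B) (⋃ a ∈ UU, Ra a) := by
    rw [Set.disjoint_left]
    intro e he he'
    simp only [Set.mem_iUnion] at he he'
    obtain ⟨B, hB, he⟩ := he
    obtain ⟨a, ha, he'⟩ := he'
    obtain ⟨p, q, heq, -, -, -, hpq⟩ := hRBshape B ((hmemSS B).1 hB) e he
    obtain ⟨p', q', heq', -, -, -, -, hpa', hqa'⟩ := hRashape a ((hmemUU a).1 ha) e he'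
    rw [heq] at heq'
    apply hpq
    rw [Sym2.eq_iff] at heq'
    rcases heq' with ⟨rfl, rfl⟩ | ⟨rfl, rfl⟩
    · rw [hpa', hqa']
    · rw [hpa', hqa']
  have hRallsplit : Rall.ncard = (∑ B ∈ SS, (RB B).ncard) + (∑ a ∈ UU, (Ra a).ncard) := by
    have h1 : (⋃ B ∈ S, RB B) = ⋃ B ∈ SS, RB B := by
      ext e
      simp only [Set.mem_iUnion, hmemSS]
    have h2 : (⋃ a ∈ UA, Ra a) = ⋃ a ∈ UU, Ra a := by
      ext e
      simp only [Set.mem_iUnion, hmemUU]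
    rw [hRall, h1, h2, Set.ncard_union_eq hD3
      (Set.Finite.biUnion (SS.finite_toSet) (fun B _ => Set.toFinite _))
      (Set.Finite.biUnion (UU.finite_toSet) (fun a _ => Set.toFinite _)),
      ncard_biUnion_eq_sum SS _ (fun B _ => Set.toFinite _) hD1,
      ncard_biUnion_eq_sum UU _ (fun a _ => Set.toFinite _) hD2]
  have hsumB : (∑ B ∈ SS, (RB B).ncard) + SS.card ≤ PF2.card := by
    rw [hcard1]
    calc (∑ B ∈ SS, (RB B).ncard) + SS.card = ∑ B ∈ SS, ((RB B).ncard + 1) := by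
          rw [Finset.sum_add_distrib, Finset.sum_const, smul_eq_mul, mul_one]
    _ ≤ ∑ B ∈ SS, (uB B).card :=
          Finset.sum_le_sum (fun B hB => hRBcard B ((hmemSS B).1 hB))
  have hsumA : (∑ a ∈ UU, (Ra a).ncard) + UU.card ≤ PF2.card := by
    rw [hcard2]
    calc (∑ a ∈ UU, (Ra a).ncard) + UU.card = ∑ a ∈ UU, ((Ra a).ncard + 1) := by
          rw [Finset.sum_add_distrib, Finset.sum_const, smul_eq_mul, mul_one]
    _ ≤ ∑ a ∈ UU, (regA a).card :=
          Finset.sum_le_sum (fun a ha => hRacard a ((hmemUU a).1 ha))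
  have hRallbound : Rall.ncard + 1 ≤ Fall.ncard := by
    rw [hRallsplit, hFallcard]
    omega
  -- ===== the global tree =====
  have hFne : Fall.Nonempty := ⟨B₀ ∩ η ⁻¹' {η v₀}, B₀, hB₀, η v₀, rfl, ⟨v₀, hv₀, rfl⟩⟩
  have hTTvertsF : TT.verts = ⋃₀ Fall := hWFall
  have hTTspanF : IsSpanningTreeOf G TT (ind G (⋃₀ Fall)) :=
    glue_spanning hTTvertsF hTTadj hFallne hFalldisj hTsspec hRallshape hFne
      hchainGlob hRallbound
  have hTTspanW : IsSpanningTreeOf G TT (ind G W) := by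
    rw [hWFall]
    exact hTTspanF
  -- ===== forcing =====
  have hEC := glue_edge_count hTTvertsF hTTadj hFallne hFalldisj hTsspec hRallshape
  have hTC := spanningTree_edge_count hTTspanF
  have hRallEq : Rall.ncard + 1 = Fall.ncard := by omega
  have hRaeqcard : ∀ a ∈ UU, (Ra a).ncard + 1 = (regA a).card := by
    by_contra hcon
    push_neg at hcon
    obtain ⟨a0, ha0, hne0⟩ := hcon
    have hlt : (∑ a ∈ UU, ((Ra a).ncard + 1)) < ∑ a ∈ UU, (regA a).card := by
      apply Finset.sum_lt_sum
      · intro a ha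
        exact hRacard a ((hmemUU a).1 ha)
      · refine ⟨a0, ha0, ?_⟩
        have := hRacard a0 ((hmemUU a0).1 ha0)
        omega
    rw [Finset.sum_add_distrib, Finset.sum_const, smul_eq_mul, mul_one, ← hcard2] at hlt
    rw [hRallsplit, hFallcard] at hRallEq
    omega
  have hFaconn : ∀ a (ha : a ∈ UA), (hex2 a ha).choose.Connected := by
    intro a ha
    haveI : Fintype ↥(blockOf '' sa a) := Fintype.ofFinite _
    obtain ⟨u, hu⟩ := id ha
    haveI : Nonempty ↥(blockOf '' sa a) := ⟨⟨blockOf u, ⟨u, hu, rfl⟩⟩⟩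
    apply isAcyclic_connected_of_ncard (hex2 a ha).choose_spec.2.1
    have h1 := hFaedge a ha
    have h2 := hRaeqcard a ((hmemUU a).2 ha)
    have h3 := pickSet_ncard_le (G := G) (s := sa a) (f := blockOf) (hex2 a ha).choose
    rw [← hRaeq a ha] at h3
    have h4 : Fintype.card ↥(blockOf '' sa a) = (regA a).card := by
      rw [← Nat.card_eq_fintype_card]
      exact hcardA a ha
    omega
  -- ===== restrictions =====
  have hblkeq : ∀ {B B' : Set V}, B ∈ S → B' ∈ S → ∀ {u : V}, u ∈ B → u ∈ B' → B = B' := by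
    intro B B' hB hB' u hu hu'
    by_contra h
    exact Set.disjoint_left.1 (ξ.blocks_disjoint _ (hSsub hB) _ (hSsub hB') h) hu hu'
  -- (i) restriction to a block
  have hspB : ∀ B (hB : B ∈ S), IsSpanningTreeOf G (TT.induce B) (ind G B) := by
    intro B hB
    have hvertsB : (TT.induce B).verts = ⋃₀ pieceFam B η := sUnion_pieceFam.symm
    have hRBsh : ∀ e ∈ RB B, ∃ p q x y, e = s(p, q) ∧ G.Adj p q ∧ x ∈ pieceFam B η ∧
        y ∈ pieceFam B η ∧ x ≠ y ∧ p ∈ x ∧ q ∈ y := by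
      intro e he
      rw [hRBeq B hB] at he
      obtain ⟨p, q, heq, hadj, hx, hy, hnepc, hp, hq⟩ :=
        pickSet_shape (hex1 B hB).choose_spec.1 he
      exact ⟨p, q, _, _, heq, hadj, hx, hy, hnepc, hp, hq⟩
    have hAdjB : ∀ u v, (TT.induce B).Adj u v ↔
        ((∃ x ∈ pieceFam B η, (Ts x).Adj u v) ∨ (s(u, v) ∈ RB B ∧ G.Adj u v)) := by
      intro u v
      rw [Subgraph.induce_adj]
      constructor
      · rintro ⟨huB, hvB, hTTa⟩
        rcases (hTTadj u v).1 hTTa with ⟨x, hxF, hadj⟩ | ⟨hRe, hGa⟩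
        · obtain ⟨B', hB', a', hxeq, hne'⟩ := hxF
          obtain ⟨hux, hvx, -⟩ := hTsadj _ ⟨B', hB', a', hxeq, hne'⟩ u v hadj
          rw [hxeq] at hux hvx
          have hBB : B' = B := hblkeq hB' hB hux.1 huB
          refine Or.inl ⟨x, ⟨a', ⟨u, ?_, hux.2⟩, ?_⟩, hadj⟩
          · rw [← hBB]; exact hux.1
          · rw [hxeq, hBB]; rfl
        · rw [hRall] at hRe
          rcases hRe with hRe | hRe
          · simp only [Set.mem_iUnion] at hRe
            obtain ⟨B'', hB'', he⟩ := hRe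
            obtain ⟨p, q, heq, -, hp, hq, -⟩ := hRBshape B'' hB'' _ he
            have huB'' : u ∈ B'' := by
              rw [Sym2.eq_iff] at heq
              rcases heq with ⟨rfl, rfl⟩ | ⟨rfl, rfl⟩
              · exact hp
              · exact hq
            have hBB : B'' = B := hblkeq hB'' hB huB'' huB
            rw [hBB] at he
            exact Or.inr ⟨he, hGa⟩
          · exfalso
            simp only [Set.mem_iUnion] at hRe
            obtain ⟨a, ha, he⟩ := hRe
            obtain ⟨p, q, heq, -, -, -, hbne, -, -⟩ := hRashape a ha _ he
            have hpq : p ∈ B ∧ q ∈ B := by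
              rw [Sym2.eq_iff] at heq
              rcases heq with ⟨rfl, rfl⟩ | ⟨rfl, rfl⟩
              · exact ⟨huB, hvB⟩
              · exact ⟨hvB, huB⟩
            apply hbne
            rw [hbeq (hSsub hB) hpq.1, hbeq (hSsub hB) hpq.2]
      · rintro (⟨x, hxpf, hadj⟩ | ⟨hRe, hGa⟩)
        · have hxF : x ∈ Fall := hpfB B hB hxpf
          obtain ⟨hux, hvx, -⟩ := hTsadj x hxF u v hadj
          have hxB : x ⊆ B := by
            obtain ⟨k, hk, rfl⟩ := hxpf
            exact Set.inter_subset_left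
          exact ⟨hxB hux, hxB hvx, (hTTadj u v).2 (Or.inl ⟨x, hxF, hadj⟩)⟩
        · obtain ⟨p, q, heq, -, hp, hq, -⟩ := hRBshape B hB _ hRe
          have huv : u ∈ B ∧ v ∈ B := by
            rw [Sym2.eq_iff] at heq
            rcases heq with ⟨rfl, rfl⟩ | ⟨rfl, rfl⟩
            · exact ⟨hp, hq⟩
            · exact ⟨hq, hp⟩
          exact ⟨huv.1, huv.2, (hTTadj u v).2 (Or.inr ⟨hRBsub B hB hRe, hGa⟩)⟩
    have hchloc : ∀ x ∈ pieceFam B η, ∀ y ∈ pieceFam B η,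
        Relation.ReflTransGen (stepRel G (pieceFam B η) (RB B)) x y := by
      rintro x ⟨k, hk, rfl⟩ y ⟨l, hl, rfl⟩
      exact pickSet_chain (hex1 B hB).choose_spec.1 subset_rfl (hRBeq B hB).symm.subset
        ((hex1 B hB).choose_spec.2.isConnected.preconnected ⟨k, hk⟩ ⟨l, hl⟩)
    have hcardloc : (RB B).ncard + 1 ≤ (pieceFam B η).ncard := by
      rw [pieceFam_ncard, himgB B, Set.ncard_coe_finset]
      exact hRBcard B hB
    obtain ⟨w, hw⟩ := ξ.blocks_nonempty B (hSsub hB)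
    have hglue := glue_spanning hvertsB hAdjB pieceFam_nonempty pieceFam_disjoint
      (fun x hx => hTsspec x (hpfB B hB hx)) hRBsh
      ⟨pieceOf B η (η w), ⟨η w, ⟨w, hw, rfl⟩, rfl⟩⟩ hchloc hcardloc
    rwa [sUnion_pieceFam] at hglue
  -- (ii) restriction to a unit of the union
  have hspA : ∀ a (ha : a ∈ UA), IsSpanningTreeOf G (TT.induce (sa a)) (ind G (sa a)) := by
    intro a ha
    have hvertsA : (TT.induce (sa a)).verts = ⋃₀ pieceFam (sa a) blockOf :=
      sUnion_pieceFam.symm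
    have hRash : ∀ e ∈ Ra a, ∃ p q x y, e = s(p, q) ∧ G.Adj p q ∧
        x ∈ pieceFam (sa a) blockOf ∧ y ∈ pieceFam (sa a) blockOf ∧ x ≠ y ∧
        p ∈ x ∧ q ∈ y := by
      intro e he
      rw [hRaeq a ha] at he
      obtain ⟨p, q, heq, hadj, hx, hy, hnepc, hp, hq⟩ :=
        pickSet_shape (hex2 a ha).choose_spec.1 he
      exact ⟨p, q, _, _, heq, hadj, hx, hy, hnepc, hp, hq⟩
    have hAdjA : ∀ u v, (TT.induce (sa a)).Adj u v ↔
        ((∃ x ∈ pieceFam (sa a) blockOf, (Ts x).Adj u v) ∨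
          (s(u, v) ∈ Ra a ∧ G.Adj u v)) := by
      intro u v
      rw [Subgraph.induce_adj]
      constructor
      · rintro ⟨husa, hvsa, hTTa⟩
        rcases (hTTadj u v).1 hTTa with ⟨x, hxF, hadj⟩ | ⟨hRe, hGa⟩
        · obtain ⟨B', hB', a', hxeq, hne'⟩ := hxF
          obtain ⟨hux, hvx, -⟩ := hTsadj _ ⟨B', hB', a', hxeq, hne'⟩ u v hadj
          rw [hxeq] at hux hvx
          have haa : a' = a := by
            have h1 : η u = a' := hux.2
            have h2 : η u = a := husa.2
            rw [← h1, h2]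
          have hbu : blockOf u = B' := hbeq (hSsub hB') hux.1
          have hmem : B' ∈ blockOf '' sa a := ⟨u, husa, hbu⟩
          refine Or.inl ⟨x, ⟨B', hmem, ?_⟩, hadj⟩
          rw [hpiecesa a B' hmem, hxeq, haa]
        · rw [hRall] at hRe
          rcases hRe with hRe | hRe
          · exfalso
            simp only [Set.mem_iUnion] at hRe
            obtain ⟨B'', hB'', he⟩ := hRe
            obtain ⟨p, q, heq, -, -, -, hpq⟩ := hRBshape B'' hB'' _ he
            apply hpq
            rw [Sym2.eq_iff] at heq
            rcases heq with ⟨rfl, rfl⟩ | ⟨rfl, rfl⟩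
            · rw [husa.2, hvsa.2]
            · rw [husa.2, hvsa.2]
          · simp only [Set.mem_iUnion] at hRe
            obtain ⟨a'', ha'', he⟩ := hRe
            obtain ⟨p, q, heq, -, -, -, -, hpa, -⟩ := hRashape a'' ha'' _ he
            have haa : a'' = a := by
              rw [Sym2.eq_iff] at heq
              rcases heq with ⟨rfl, rfl⟩ | ⟨rfl, rfl⟩
              · rw [← hpa, husa.2]
              · rw [← hpa, hvsa.2]
            rw [haa] at he
            exact Or.inr ⟨he, hGa⟩
      · rintro (⟨x, hxpf, hadj⟩ | ⟨hRe, hGa⟩)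
        · have hxF : x ∈ Fall := hpfA a ha hxpf
          obtain ⟨hux, hvx, -⟩ := hTsadj x hxF u v hadj
          have hxs : x ⊆ sa a := by
            obtain ⟨k, hk, rfl⟩ := hxpf
            exact Set.inter_subset_left
          exact ⟨hxs hux, hxs hvx, (hTTadj u v).2 (Or.inl ⟨x, hxF, hadj⟩)⟩
        · obtain ⟨p, q, heq, -, hp, hq, -⟩ := hRashape a ha _ hRe
          have huv : u ∈ sa a ∧ v ∈ sa a := by
            rw [Sym2.eq_iff] at heq
            rcases heq with ⟨rfl, rfl⟩ | ⟨rfl, rfl⟩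
            · exact ⟨hp, hq⟩
            · exact ⟨hq, hp⟩
          exact ⟨huv.1, huv.2, (hTTadj u v).2 (Or.inr ⟨hRasub a ha hRe, hGa⟩)⟩
    have hchlocA : ∀ x ∈ pieceFam (sa a) blockOf, ∀ y ∈ pieceFam (sa a) blockOf,
        Relation.ReflTransGen (stepRel G (pieceFam (sa a) blockOf) (Ra a)) x y := by
      rintro x ⟨k, hk, rfl⟩ y ⟨l, hl, rfl⟩
      exact pickSet_chain (hex2 a ha).choose_spec.1 subset_rfl (hRaeq a ha).symm.subset
        ((hFaconn a ha).preconnected ⟨k, hk⟩ ⟨l, hl⟩)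
    have hcardlocA : (Ra a).ncard + 1 ≤ (pieceFam (sa a) blockOf).ncard := by
      have heq : (pieceFam (sa a) blockOf).ncard = (regA a).card := by
        rw [pieceFam_ncard, ← Nat.card_coe_set_eq]
        exact hcardA a ha
      rw [heq]
      exact hRacard a ha
    obtain ⟨w, hw⟩ := id ha
    have hglue := glue_spanning hvertsA hAdjA pieceFam_nonempty pieceFam_disjoint
      (fun x hx => hTsspec x (hpfA a ha hx)) hRash
      ⟨pieceOf (sa a) blockOf (blockOf w), ⟨blockOf w, ⟨w, hw, rfl⟩, rfl⟩⟩ hchlocA hcardlocA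
    rwa [sUnion_pieceFam] at hglue
  -- (iii) restriction to a single piece
  have hspP : ∀ B (hB : B ∈ S) (a : A), (B ∩ η ⁻¹' {a}).Nonempty →
      IsSpanningTreeOf G (TT.induce (B ∩ η ⁻¹' {a})) (ind G (B ∩ η ⁻¹' {a})) := by
    intro B hB a hnea
    have hx₀F : (B ∩ η ⁻¹' {a}) ∈ Fall := ⟨B, hB, a, rfl, hnea⟩
    have hverts : (TT.induce (B ∩ η ⁻¹' {a})).verts
        = ⋃₀ ({B ∩ η ⁻¹' {a}} : Set (Set V)) := by
      rw [Set.sUnion_singleton]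
      rfl
    have hAdjP : ∀ u v, (TT.induce (B ∩ η ⁻¹' {a})).Adj u v ↔
        ((∃ x ∈ ({B ∩ η ⁻¹' {a}} : Set (Set V)), (Ts x).Adj u v) ∨
          (s(u, v) ∈ (∅ : Set (Sym2 V)) ∧ G.Adj u v)) := by
      intro u v
      rw [Subgraph.induce_adj]
      constructor
      · rintro ⟨hu, hv, hTTa⟩
        rcases (hTTadj u v).1 hTTa with ⟨x, hxF, hadj⟩ | ⟨hRe, hGa⟩
        · obtain ⟨B', hB', a', hxeq, hne'⟩ := hxF
          obtain ⟨hux, hvx, -⟩ := hTsadj _ ⟨B', hB', a', hxeq, hne'⟩ u v hadj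
          rw [hxeq] at hux hvx
          have hBB : B' = B := hblkeq hB' hB hux.1 hu.1
          have haa : a' = a := by
            have h1 : η u = a' := hux.2
            have h2 : η u = a := hu.2
            rw [← h1, h2]
          refine Or.inl ⟨x, ?_, hadj⟩
          rw [Set.mem_singleton_iff, hxeq, hBB, haa]
        · exfalso
          rw [hRall] at hRe
          rcases hRe with hRe | hRe
          · simp only [Set.mem_iUnion] at hRe
            obtain ⟨B'', hB'', he⟩ := hRe
            obtain ⟨p, q, heq, -, -, -, hpq⟩ := hRBshape B'' hB'' _ he
            apply hpq
            rw [Sym2.eq_iff] at heq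
            rcases heq with ⟨rfl, rfl⟩ | ⟨rfl, rfl⟩
            · rw [hu.2, hv.2]
            · rw [hu.2, hv.2]
          · simp only [Set.mem_iUnion] at hRe
            obtain ⟨a'', ha'', he⟩ := hRe
            obtain ⟨p, q, heq, -, -, -, hbne, -, -⟩ := hRashape a'' ha'' _ he
            have hpq : p ∈ B ∧ q ∈ B := by
              rw [Sym2.eq_iff] at heq
              rcases heq with ⟨rfl, rfl⟩ | ⟨rfl, rfl⟩
              · exact ⟨hu.1, hv.1⟩
              · exact ⟨hv.1, hu.1⟩
            apply hbne
            rw [hbeq (hSsub hB) hpq.1, hbeq (hSsub hB) hpq.2]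
      · rintro (⟨x, hx, hadj⟩ | ⟨h, -⟩)
        · rw [Set.mem_singleton_iff] at hx
          subst hx
          obtain ⟨hux, hvx, -⟩ := hTsadj _ hx₀F u v hadj
          exact ⟨hux, hvx, (hTTadj u v).2 (Or.inl ⟨_, hx₀F, hadj⟩)⟩
        · exact absurd h (Set.notMem_empty _)
    have hglue := glue_spanning hverts hAdjP
      (by rintro x hx; rw [Set.mem_singleton_iff] at hx; subst hx; exact hnea)
      (by rintro x hx y hy hxy
          rw [Set.mem_singleton_iff] at hx hy
          exact absurd (hx.trans hy.symm) hxy)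
      (by rintro x hx; rw [Set.mem_singleton_iff] at hx; subst hx; exact hTsspec _ hx₀F)
      (by rintro e he; exact absurd he (Set.notMem_empty _))
      ⟨B ∩ η ⁻¹' {a}, rfl⟩
      (by rintro x hx y hy
          rw [Set.mem_singleton_iff] at hx hy
          rw [hx, hy])
      (by rw [Set.ncard_empty, Set.ncard_singleton])
    rwa [Set.sUnion_singleton] at hglue
  -- induced-of-induced
  have hiind : ∀ x y : Set V, y ⊆ x → (TT.induce x).induce y = TT.induce y := by
    intro x y hxy
    apply Subgraph.ext
    · rfl
    · ext u v
      simp only [Subgraph.induce_adj]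
      constructor
      · rintro ⟨hu, hv, -, -, h⟩
        exact ⟨hu, hv, h⟩
      · rintro ⟨hu, hv, h⟩
        exact ⟨hu, hv, hxy hu, hxy hv, h⟩
  -- ===== assembly =====
  refine ⟨TT, ?_, ?_, ?_⟩
  · intro B hB
    refine ⟨hspB B hB, ?_⟩
    intro a hnea
    rw [hiind B (B ∩ η ⁻¹' {a}) Set.inter_subset_left]
    exact hspP B hB a hnea
  · exact hTTspanW
  · intro a hnea
    have ha : a ∈ UA := hnea
    exact hspA a ha

end Redist
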